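/- arXiv:1902.01278 — 3 statements merged into one kernel-verified Lean document; each statement's English description precedes it below -/
import Mathlib

section
/- If f, g, and h are real-rooted polynomials with nonnegative coefficients such that f interlaces g and f interlaces h, then f interlaces g + h. -/
open Polynomial

/-- The roots of a real polynomial, listed in ascending order. -/
noncomputable def ascRoots (p : Polynomial ℝ) : List ℝ := p.roots.sort (· ≤ ·)

/-- A real polynomial is real-rooted if it has as many real roots
(with multiplicity) as its degree. -/
def RealRooted (p : Polynomial ℝ) : Prop := p.roots.card = p.natDegree

/-- `Interlaces g f` means `g ≪ f`: both are real-rooted, and either they have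
equal degrees `d` with roots `v_d ≤ u_d ≤ v_{d-1} ≤ ⋯ ≤ v_1 ≤ u_1`, or
`deg f = deg g + 1 = d` with `u_d ≤ v_{d-1} ≤ ⋯ ≤ v_1 ≤ u_1`, where `u` are the
roots of `f` and `v` are the roots of `g` (here written with ascending
indexing). -/
def Interlaces (g f : Polynomial ℝ) : Prop :=
  RealRooted f ∧ RealRooted g ∧
  ((f.natDegree = g.natDegree ∧
      (∀ i, i < f.natDegree → (ascRoots g)[i]! ≤ (ascRoots f)[i]!) ∧
      (∀ i, i + 1 < f.natDegree → (ascRoots f)[i]! ≤ (ascRoots g)[i + 1]!)) ∨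
   (f.natDegree = g.natDegree + 1 ∧
      (∀ i, i < g.natDegree →
        (ascRoots f)[i]! ≤ (ascRoots g)[i]! ∧ (ascRoots g)[i]! ≤ (ascRoots f)[i + 1]!)))

noncomputable def acnt (q : Polynomial ℝ) (t : ℝ) : ℕ := q.roots.countP (fun x => t ≤ x)
noncomputable def lcnt (q : Polynomial ℝ) (t : ℝ) : ℕ := q.roots.countP (fun x => x ≤ t)

lemma ascRoots_length (q : Polynomial ℝ) : (ascRoots q).length = Multiset.card q.roots :=
  Multiset.length_sort _

lemma ascRoots_sorted (q : Polynomial ℝ) : (ascRoots q).Pairwise (· ≤ ·) :=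
  Multiset.pairwise_sort _ _

lemma ascRoots_coe (q : Polynomial ℝ) : (↑(ascRoots q) : Multiset ℝ) = q.roots :=
  Multiset.sort_eq _ _

lemma sorted_ge_iff {l : List ℝ} (hs : l.Pairwise (· ≤ ·)) {i : ℕ} (hi : i < l.length) (t : ℝ) :
    t ≤ l[i]! ↔ l.length - i ≤ l.countP (fun x => decide (t ≤ x)) := by
  have hp := List.pairwise_iff_getElem.mp hs
  rw [getElem!_pos l i hi]
  constructor
  · intro ht
    have hall : ∀ x ∈ l.drop i, (fun x => decide (t ≤ x)) x = true := by
      intro x hx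
      obtain ⟨j, hj, rfl⟩ := List.mem_iff_getElem.mp hx
      rw [List.getElem_drop]
      simp only [decide_eq_true_eq]
      have hj2 : i + j < l.length := by simp [List.length_drop] at hj; omega
      rcases Nat.eq_zero_or_pos j with rfl | hj0
      · simpa using ht
      · exact le_trans ht (hp i (i+j) (by omega) hj2 (by omega))
    calc l.length - i = (l.drop i).length := by simp
    _ = (l.drop i).countP (fun x => decide (t ≤ x)) := (List.countP_eq_length.mpr hall).symm
    _ ≤ (l.take i).countP (fun x => decide (t ≤ x)) + (l.drop i).countP (fun x => decide (t ≤ x)) := Nat.le_add_left _ _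
    _ = l.countP (fun x => decide (t ≤ x)) := by rw [← List.countP_append, List.take_append_drop]
  · intro hc
    by_contra hlt
    push_neg at hlt
    have hnone : ∀ x ∈ l.take (i+1), (fun x => decide (t ≤ x)) x = false := by
      intro x hx
      obtain ⟨j, hj, rfl⟩ := List.mem_iff_getElem.mp hx
      have hj' : j < i + 1 := by simp [List.length_take] at hj; omega
      rw [List.getElem_take]
      simp only [decide_eq_false_iff_not, not_le]
      rcases Nat.lt_or_ge j i with hji | hji
      · exact lt_of_le_of_lt (hp j i (by omega) hi hji) hlt
      · have : j = i := by omega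
        subst this; exact hlt
    have : l.countP (fun x => decide (t ≤ x)) ≤ l.length - (i+1) := by
      calc l.countP (fun x => decide (t ≤ x))
          = (l.take (i+1)).countP (fun x => decide (t ≤ x)) + (l.drop (i+1)).countP (fun x => decide (t ≤ x)) := by
            rw [← List.countP_append, List.take_append_drop]
      _ = (l.drop (i+1)).countP (fun x => decide (t ≤ x)) := by
            rw [List.countP_eq_zero.mpr (by intro a ha; simpa using hnone a ha), Nat.zero_add]
      _ ≤ (l.drop (i+1)).length := List.countP_le_length
      _ = l.length - (i+1) := by simp
    omega

lemma acnt_eq_list (q : Polynomial ℝ) (t : ℝ) :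
    acnt q t = (ascRoots q).countP (fun x => decide (t ≤ x)) := by
  rw [acnt, ← ascRoots_coe q]
  exact Multiset.coe_countP _ _

lemma lcnt_eq_list (q : Polynomial ℝ) (t : ℝ) :
    lcnt q t = (ascRoots q).countP (fun x => decide (x ≤ t)) := by
  rw [lcnt, ← ascRoots_coe q]
  exact Multiset.coe_countP _ _

lemma acnt_ge_iff {q : Polynomial ℝ} (hq : RealRooted q) {i : ℕ} (hi : i < q.natDegree) (t : ℝ) :
    t ≤ (ascRoots q)[i]! ↔ q.natDegree - i ≤ acnt q t := by
  have hlen : (ascRoots q).length = q.natDegree := by rw [ascRoots_length, hq]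
  rw [acnt_eq_list, ← hlen]
  exact sorted_ge_iff (ascRoots_sorted q) (by omega) t

lemma acnt_le {q : Polynomial ℝ} (hq : RealRooted q) (t : ℝ) : acnt q t ≤ q.natDegree := by
  rw [← hq]; exact Multiset.countP_le_card _ _

lemma acnt_of_idx_le {q : Polynomial ℝ} (hq : RealRooted q) {i : ℕ} (hi : i < q.natDegree)
    {t : ℝ} (ht : t ≤ (ascRoots q)[i]!) : q.natDegree - i ≤ acnt q t :=
  (acnt_ge_iff hq hi t).mp ht

lemma idx_le_of_acnt {q : Polynomial ℝ} (hq : RealRooted q) {i : ℕ} (hi : i < q.natDegree)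
    {t : ℝ} (ht : q.natDegree - i ≤ acnt q t) : t ≤ (ascRoots q)[i]! :=
  (acnt_ge_iff hq hi t).mpr ht

lemma acnt_lt_of_idx_lt {q : Polynomial ℝ} (hq : RealRooted q) {i : ℕ} (hi : i < q.natDegree)
    {t : ℝ} (ht : (ascRoots q)[i]! < t) : acnt q t < q.natDegree - i := by
  by_contra hc
  push_neg at hc
  exact absurd (idx_le_of_acnt hq hi hc) (not_le.mpr ht)

lemma interlaces_iff (f g : Polynomial ℝ) :
    Interlaces f g ↔ RealRooted f ∧ RealRooted g ∧
      (g.natDegree = f.natDegree ∨ g.natDegree = f.natDegree + 1) ∧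
      ∀ t, acnt f t ≤ acnt g t ∧ acnt g t ≤ acnt f t + 1 := by
  set n := f.natDegree with hn
  constructor
  · rintro ⟨hg, hf, hcase⟩
    refine ⟨hf, hg, ?_, ?_⟩
    · rcases hcase with ⟨hd, _⟩ | ⟨hd, _⟩
      · exact Or.inl hd
      · exact Or.inr hd
    · intro t
      rcases hcase with ⟨hd, hC1, hC2⟩ | ⟨hd, hC3⟩
      · -- equal degrees : g.natDegree = n
        have hdg : g.natDegree = n := hd
        constructor
        · rcases Nat.eq_zero_or_pos (acnt f t) with h0 | hpos
          · omega
          · set c := acnt f t with hc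
            have hcn : c ≤ n := acnt_le hf t
            have hi : n - c < n := by omega
            have h1 : t ≤ (ascRoots f)[n - c]! := idx_le_of_acnt hf hi (by omega)
            have h2 : (ascRoots f)[n - c]! ≤ (ascRoots g)[n - c]! := hC1 _ (by omega)
            have := acnt_of_idx_le hg (by omega : n - c < g.natDegree) (le_trans h1 h2)
            omega
        · rcases Nat.lt_or_ge (acnt g t) 2 with h0 | hpos
          · omega
          · set c := acnt g t with hc
            have hcn : c ≤ g.natDegree := acnt_le hg t
            have hi : n - c < n := by omega
            have h1 : t ≤ (ascRoots g)[n - c]! := idx_le_of_acnt hg (by omega) (by omega)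
            have h2 : (ascRoots g)[n - c]! ≤ (ascRoots f)[n - c + 1]! := hC2 _ (by omega)
            have := acnt_of_idx_le hf (by omega : n - c + 1 < n) (le_trans h1 h2)
            omega
      · -- g.natDegree = n + 1
        constructor
        · rcases Nat.eq_zero_or_pos (acnt f t) with h0 | hpos
          · omega
          · set c := acnt f t with hc
            have hcn : c ≤ n := acnt_le hf t
            have hi : n - c < n := by omega
            have h1 : t ≤ (ascRoots f)[n - c]! := idx_le_of_acnt hf hi (by omega)
            have h2 := (hC3 _ hi).2
            have := acnt_of_idx_le hg (by omega : n - c + 1 < g.natDegree) (le_trans h1 h2)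
            omega
        · rcases Nat.lt_or_ge (acnt g t) 2 with h0 | hpos
          · omega
          · set c := acnt g t with hc
            have hcn : c ≤ g.natDegree := acnt_le hg t
            have hi1 : n + 1 - c < g.natDegree := by omega
            have h1 : t ≤ (ascRoots g)[n + 1 - c]! := idx_le_of_acnt hg hi1 (by omega)
            have h2 := (hC3 _ (by omega : n + 1 - c < n)).1
            have := acnt_of_idx_le hf (by omega : n + 1 - c < n) (le_trans h1 h2)
            omega
  · rintro ⟨hf, hg, hdeg, hcnt⟩
    refine ⟨hg, hf, ?_⟩
    rcases hdeg with hd | hd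
    · left
      refine ⟨hd, ?_, ?_⟩
      · intro i hi
        by_contra hcon
        push_neg at hcon
        have h1 := acnt_of_idx_le hf (by omega : i < n) (le_refl (ascRoots f)[i]!)
        have h2 := acnt_lt_of_idx_lt hg (by omega : i < g.natDegree) hcon
        have := (hcnt ((ascRoots f)[i]!)).1
        omega
      · intro i hi
        by_contra hcon
        push_neg at hcon
        have h1 := acnt_of_idx_le hg (by omega : i < g.natDegree) (le_refl (ascRoots g)[i]!)
        have h2 := acnt_lt_of_idx_lt hf (by omega : i + 1 < n) hcon
        have := (hcnt ((ascRoots g)[i]!)).2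
        omega
    · right
      refine ⟨hd, ?_⟩
      intro i hi
      constructor
      · by_contra hcon
        push_neg at hcon
        have h1 := acnt_of_idx_le hg (by omega : i < g.natDegree) (le_refl (ascRoots g)[i]!)
        have h2 := acnt_lt_of_idx_lt hf hi hcon
        have := (hcnt ((ascRoots g)[i]!)).2
        omega
      · by_contra hcon
        push_neg at hcon
        have h1 := acnt_of_idx_le hf hi (le_refl (ascRoots f)[i]!)
        have h2 := acnt_lt_of_idx_lt hg (by omega : i + 1 < g.natDegree) hcon
        have := (hcnt ((ascRoots f)[i]!)).1
        omega

lemma exists_lb (M : Multiset ℝ) : ∃ t : ℝ, ∀ x ∈ M, t ≤ x := by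
  induction M using Multiset.induction with
  | empty => exact ⟨0, by simp⟩
  | cons a M ih =>
    obtain ⟨t, ht⟩ := ih
    exact ⟨min t a, by
      intro x hx
      rcases Multiset.mem_cons.mp hx with rfl | hx
      · exact min_le_right _ _
      · exact le_trans (min_le_left _ _) (ht x hx)⟩

lemma gap_above (M : Multiset ℝ) (t : ℝ) : ∃ s, t < s ∧ ∀ x ∈ M, x ≤ t ∨ s < x := by
  induction M using Multiset.induction with
  | empty => exact ⟨t + 1, by simp, by simp⟩
  | cons a M ih =>
    obtain ⟨s, hts, hM⟩ := ih
    by_cases ha : a ≤ t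
    · exact ⟨s, hts, by
        intro x hx
        rcases Multiset.mem_cons.mp hx with rfl | hx
        · exact Or.inl ha
        · exact hM x hx⟩
    · push_neg at ha
      refine ⟨min s ((t + a) / 2), by simp [hts]; linarith, ?_⟩
      intro x hx
      rcases Multiset.mem_cons.mp hx with rfl | hx
      · exact Or.inr (lt_of_le_of_lt (min_le_right _ _) (by linarith))
      · rcases hM x hx with h | h
        · exact Or.inl h
        · exact Or.inr (lt_of_le_of_lt (min_le_left _ _) h)

lemma gap_below (M : Multiset ℝ) (t : ℝ) : ∃ s, s < t ∧ ∀ x ∈ M, t ≤ x ∨ x < s := by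
  induction M using Multiset.induction with
  | empty => exact ⟨t - 1, by simp, by simp⟩
  | cons a M ih =>
    obtain ⟨s, hts, hM⟩ := ih
    by_cases ha : t ≤ a
    · exact ⟨s, hts, by
        intro x hx
        rcases Multiset.mem_cons.mp hx with rfl | hx
        · exact Or.inl ha
        · exact hM x hx⟩
    · push_neg at ha
      refine ⟨max s ((t + a) / 2), by simp [hts]; linarith, ?_⟩
      intro x hx
      rcases Multiset.mem_cons.mp hx with rfl | hx
      · exact Or.inr (lt_of_lt_of_le (by linarith) (le_max_right _ _))
      · rcases hM x hx with h | h
        · exact Or.inl h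
        · exact Or.inr (lt_of_lt_of_le h (le_max_left _ _))

lemma countP_split_above (M : Multiset ℝ) {t s : ℝ} (hts : t < s)
    (hgap : ∀ x ∈ M, x ≤ t ∨ s < x) :
    M.countP (fun x => t ≤ x) = M.count t + M.countP (fun x => s ≤ x) := by
  induction M using Multiset.induction with
  | empty => simp
  | cons a M ih =>
    have hga := hgap a (Multiset.mem_cons_self a M)
    have ihM := ih (fun x hx => hgap x (Multiset.mem_cons_of_mem hx))
    rw [Multiset.countP_cons, Multiset.countP_cons, Multiset.count_cons, ihM]
    rcases hga with hle | hgt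
    · have h2 : ¬ s ≤ a := not_le.mpr (lt_of_le_of_lt hle hts)
      by_cases h1 : a = t
      · subst h1
        simp [h2]
        omega
      · have h3 : ¬ t ≤ a := by
          rcases lt_or_eq_of_le hle with h | h
          · exact not_le.mpr h
          · exact absurd h h1
        have h4 : ¬ t = a := fun h => h1 h.symm
        simp [h2, h3, h4]
    · have h2 : s ≤ a := hgt.le
      have h3 : t ≤ a := le_trans hts.le h2
      have h4 : ¬ t = a := by
        intro h
        rw [← h] at hgt
        exact absurd hts (lt_asymm hgt)
      simp [h2, h3, h4]
      omega

lemma countP_split_below (M : Multiset ℝ) {t s : ℝ} (hst : s < t)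
    (hgap : ∀ x ∈ M, t ≤ x ∨ x < s) :
    M.countP (fun x => x ≤ t) = M.count t + M.countP (fun x => x ≤ s) := by
  induction M using Multiset.induction with
  | empty => simp
  | cons a M ih =>
    have hga := hgap a (Multiset.mem_cons_self a M)
    have ihM := ih (fun x hx => hgap x (Multiset.mem_cons_of_mem hx))
    rw [Multiset.countP_cons, Multiset.countP_cons, Multiset.count_cons, ihM]
    rcases hga with hge | hlt
    · have h2 : ¬ a ≤ s := not_le.mpr (lt_of_lt_of_le hst hge)
      by_cases h1 : a = t
      · subst h1
        simp [h2]
        omega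
      · have h3 : ¬ a ≤ t := by
          rcases lt_or_eq_of_le hge with h | h
          · exact not_le.mpr h
          · exact absurd h.symm h1
        have h4 : ¬ t = a := fun h => h1 h.symm
        simp [h2, h3, h4]
    · have h2 : a ≤ s := hlt.le
      have h3 : a ≤ t := le_trans h2 hst.le
      have h4 : ¬ t = a := by
        intro h
        rw [← h] at hlt
        exact absurd hst (lt_asymm hlt)
      simp [h2, h3, h4]
      omega

lemma prod_neg_sign (M : Multiset ℝ) (hM : ∀ x ∈ M, x < 0) :
    0 < (-1 : ℝ) ^ (Multiset.card M) * M.prod := by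
  induction M using Multiset.induction with
  | empty => simp
  | cons a M ih =>
    have ha := hM a (Multiset.mem_cons_self a M)
    have ihM := ih (fun x hx => hM x (Multiset.mem_cons_of_mem hx))
    rw [Multiset.prod_cons, Multiset.card_cons, pow_succ]
    have : (-1 : ℝ) ^ (Multiset.card M) * -1 * (a * M.prod)
        = (-a) * ((-1 : ℝ) ^ (Multiset.card M) * M.prod) := by ring
    rw [this]
    exact mul_pos (by linarith) ihM

lemma prod_pos_of_pos (M : Multiset ℝ) (hM : ∀ x ∈ M, 0 < x) : 0 < M.prod := by
  induction M using Multiset.induction with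
  | empty => simp
  | cons a M ih =>
    rw [Multiset.prod_cons]
    exact mul_pos (hM a (Multiset.mem_cons_self a M)) (ih fun x hx => hM x (Multiset.mem_cons_of_mem hx))

lemma sign_eval {q : Polynomial ℝ} (hq : RealRooted q) (hlc : 0 < q.leadingCoeff)
    {t : ℝ} (ht : t ∉ q.roots) :
    0 < (-1 : ℝ) ^ (q.roots.countP (fun x => t < x)) * q.eval t := by
  have hfact := Polynomial.C_leadingCoeff_mul_prod_multiset_X_sub_C (p := q) hq
  have heval : q.eval t
      = q.leadingCoeff * ((q.roots.map (fun a => t - a)).prod) := by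
    conv_lhs => rw [← hfact]
    rw [Polynomial.eval_mul, Polynomial.eval_C, Polynomial.eval_multiset_prod]
    congr 2
    rw [Multiset.map_map]
    congr 1
    funext a
    simp
  rw [heval]
  have hsplit : q.roots = q.roots.filter (fun x => t < x) + q.roots.filter (fun x => ¬ t < x) :=
    (Multiset.filter_add_not _ _).symm
  rw [Multiset.countP_eq_card_filter]
  have hprodsplit : (q.roots.map (fun a => t - a)).prod
      = ((q.roots.filter (fun x => t < x)).map (fun a => t - a)).prod
        * ((q.roots.filter (fun x => ¬ t < x)).map (fun a => t - a)).prod := by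
    conv_lhs => rw [hsplit]
    rw [Multiset.map_add, Multiset.prod_add]
  rw [hprodsplit]
  have h1 : 0 < (-1 : ℝ) ^ (Multiset.card (q.roots.filter (fun x => t < x)))
      * ((q.roots.filter (fun x => t < x)).map (fun a => t - a)).prod := by
    have := prod_neg_sign ((q.roots.filter (fun x => t < x)).map (fun a => t - a)) (by
      intro x hx
      obtain ⟨a, ha, rfl⟩ := Multiset.mem_map.mp hx
      have := (Multiset.mem_filter.mp ha).2
      linarith)
    rwa [Multiset.card_map] at this
  have h2 : 0 < ((q.roots.filter (fun x => ¬ t < x)).map (fun a => t - a)).prod := by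
    apply prod_pos_of_pos
    intro x hx
    obtain ⟨a, ha, rfl⟩ := Multiset.mem_map.mp hx
    obtain ⟨hmem, hba⟩ := Multiset.mem_filter.mp ha
    push_neg at hba
    rcases lt_or_eq_of_le hba with h | h
    · linarith
    · exact absurd (h ▸ hmem) ht
  calc (0:ℝ) < ((-1 : ℝ) ^ (Multiset.card (q.roots.filter (fun x => t < x)))
        * ((q.roots.filter (fun x => t < x)).map (fun a => t - a)).prod)
        * (q.leadingCoeff * ((q.roots.filter (fun x => ¬ t < x)).map (fun a => t - a)).prod) := by
        exact mul_pos h1 (mul_pos hlc h2)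
  _ = (-1 : ℝ) ^ (Multiset.card (q.roots.filter (fun x => t < x)))
        * (q.leadingCoeff * (((q.roots.filter (fun x => t < x)).map (fun a => t - a)).prod
          * ((q.roots.filter (fun x => ¬ t < x)).map (fun a => t - a)).prod)) := by ring

lemma countP_compl (M : Multiset ℝ) (s : ℝ) :
    M.countP (fun x => x ≤ s) + M.countP (fun x => s < x) = Multiset.card M := by
  induction M using Multiset.induction with
  | empty => simp
  | cons a M ih =>
    rw [Multiset.countP_cons, Multiset.countP_cons, Multiset.card_cons]
    by_cases ha : a ≤ s
    · simp [ha, not_lt.mpr ha]; omega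
    · simp [ha, not_le.mp ha]; omega

lemma acnt_mono (q : Polynomial ℝ) {t t' : ℝ} (h : t ≤ t') : acnt q t' ≤ acnt q t := by
  rw [acnt, acnt, Multiset.countP_eq_card_filter, Multiset.countP_eq_card_filter]
  exact Multiset.card_le_card (Multiset.monotone_filter_right _ (fun x hx => le_trans h hx))

lemma lcnt_mono (q : Polynomial ℝ) {t t' : ℝ} (h : t ≤ t') : lcnt q t ≤ lcnt q t' := by
  rw [lcnt, lcnt, Multiset.countP_eq_card_filter, Multiset.countP_eq_card_filter]
  exact Multiset.card_le_card (Multiset.monotone_filter_right _ (fun x hx => le_trans hx h))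

lemma eventually_pos {w : Polynomial ℝ} (hw : w ≠ 0) (hlc : 0 < w.leadingCoeff) (b : ℝ) :
    ∃ x, b ≤ x ∧ 0 < w.eval x := by
  rcases Nat.eq_zero_or_pos w.natDegree with h0 | hpos
  · refine ⟨b, le_refl _, ?_⟩
    have hC := Polynomial.eq_C_of_natDegree_eq_zero h0
    have hc : w.coeff 0 = w.leadingCoeff := by rw [Polynomial.leadingCoeff, h0]
    rw [hC, Polynomial.eval_C, hc]
    exact hlc
  · have htd := Polynomial.tendsto_atTop_of_leadingCoeff_nonneg w
      (Polynomial.natDegree_pos_iff_degree_pos.mp hpos) hlc.le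
    have h1 := htd.eventually_gt_atTop 0
    have h2 := Filter.eventually_ge_atTop b
    obtain ⟨x, hx1, hx2⟩ := (h1.and h2).exists
    exact ⟨x, hx2, hx1⟩

lemma pos_of_no_roots_ge {w : Polynomial ℝ} (hw : w ≠ 0) (hlc : 0 < w.leadingCoeff) {t : ℝ}
    (hnr : ∀ z ∈ w.roots, z < t) : ∀ x, t ≤ x → 0 < w.eval x := by
  intro x hx
  obtain ⟨y, hy1, hy2⟩ := eventually_pos hw hlc x
  rcases lt_trichotomy (w.eval x) 0 with hneg | h0 | hpos
  · exfalso
    obtain ⟨c, hc, hc0⟩ := intermediate_value_Icc hy1 (w.continuous.continuousOn)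
      ⟨hneg.le, hy2.le⟩
    have hcr : c ∈ w.roots := Polynomial.mem_roots'.mpr ⟨hw, hc0⟩
    have := hnr c hcr
    have : t ≤ c := le_trans hx hc.1
    linarith [hnr c hcr]
  · exact absurd (hnr x (Polynomial.mem_roots'.mpr ⟨hw, h0⟩)) (not_lt.mpr hx)
  · exact hpos

lemma eventually_neg_inf {w : Polynomial ℝ} (hw : w ≠ 0) (hlc : 0 < w.leadingCoeff) (b : ℝ) :
    ∃ x, x ≤ b ∧ 0 < (-1 : ℝ) ^ w.natDegree * w.eval x := by
  set d := w.natDegree with hd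
  set v : Polynomial ℝ := Polynomial.C ((-1 : ℝ) ^ d) * (w.comp (-Polynomial.X)) with hv
  have hXne : (-Polynomial.X : Polynomial ℝ).natDegree ≠ 0 := by
    rw [Polynomial.natDegree_neg, Polynomial.natDegree_X]; omega
  have hclc : (w.comp (-Polynomial.X)).leadingCoeff = w.leadingCoeff * (-1 : ℝ) ^ d := by
    rw [Polynomial.leadingCoeff_comp hXne]
    congr 1
    rw [Polynomial.leadingCoeff_neg, Polynomial.leadingCoeff_X]
  have hsq : ((-1 : ℝ) ^ d) * ((-1 : ℝ) ^ d) = 1 := by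
    rw [← pow_add]
    exact Even.neg_one_pow ⟨d, rfl⟩
  have hvlc : v.leadingCoeff = w.leadingCoeff := by
    rw [hv, Polynomial.leadingCoeff_mul, Polynomial.leadingCoeff_C, hclc]
    calc (-1 : ℝ) ^ d * (w.leadingCoeff * (-1 : ℝ) ^ d)
        = w.leadingCoeff * ((-1 : ℝ) ^ d * (-1 : ℝ) ^ d) := by ring
      _ = w.leadingCoeff := by rw [hsq, mul_one]
  have hv0 : v ≠ 0 := by
    intro hvz
    rw [hvz, Polynomial.leadingCoeff_zero] at hvlc
    exact absurd hvlc.symm (ne_of_gt hlc)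
  have hveval : ∀ y, v.eval y = (-1 : ℝ) ^ d * w.eval (-y) := by
    intro y
    rw [hv, Polynomial.eval_mul, Polynomial.eval_C, Polynomial.eval_comp]
    simp
  obtain ⟨y, hy1, hy2⟩ := eventually_pos hv0 (hvlc ▸ hlc) (-b)
  refine ⟨-y, by linarith, ?_⟩
  rw [hveval y] at hy2
  exact hy2

lemma pos_of_no_roots_le {w : Polynomial ℝ} (hw : w ≠ 0) (hlc : 0 < w.leadingCoeff) {t : ℝ}
    (hnr : ∀ z ∈ w.roots, t < z) : ∀ x, x ≤ t → 0 < (-1 : ℝ) ^ w.natDegree * w.eval x := by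
  intro x hx
  obtain ⟨y, hy1, hy2⟩ := eventually_neg_inf hw hlc x
  set W : Polynomial ℝ := Polynomial.C ((-1 : ℝ) ^ w.natDegree) * w with hW
  have hne : ((-1 : ℝ) ^ w.natDegree) ≠ 0 := by positivity
  have hWroots : W.roots = w.roots := Polynomial.roots_C_mul w hne
  have hWeval : ∀ z, W.eval z = (-1 : ℝ) ^ w.natDegree * w.eval z := by
    intro z; rw [hW, Polynomial.eval_mul, Polynomial.eval_C]
  have hW0 : W ≠ 0 := mul_ne_zero (Polynomial.C_ne_zero.mpr hne) hw
  rcases lt_trichotomy (W.eval x) 0 with hneg | h0 | hpos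
  · exfalso
    obtain ⟨c, hc, hc0⟩ := intermediate_value_Icc' hy1 (W.continuous.continuousOn)
      ⟨hneg.le, by rw [hWeval y]; exact hy2.le⟩
    have hcr : c ∈ w.roots := by
      rw [← hWroots]
      exact Polynomial.mem_roots'.mpr ⟨hW0, hc0⟩
    have := hnr c hcr
    have : c ≤ t := le_trans hc.2 hx
    linarith
  · exfalso
    have hxr : x ∈ w.roots := by
      rw [← hWroots]
      refine Polynomial.mem_roots'.mpr ⟨hW0, h0⟩
    exact absurd (hnr x hxr) (not_lt.mpr hx)
  · rw [hWeval x] at hpos; exact hpos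

lemma factor_out (p : Polynomial ℝ) (hp : p ≠ 0) (R : Multiset ℝ) (hR : R ≤ p.roots) :
    ∃ w : Polynomial ℝ,
      p = (R.map (fun a => Polynomial.X - Polynomial.C a)).prod * w ∧ w ≠ 0 ∧
      w.leadingCoeff = p.leadingCoeff ∧ w.roots = p.roots - R ∧
      w.natDegree = p.natDegree - Multiset.card R := by
  have hdvd : (R.map (fun a => Polynomial.X - Polynomial.C a)).prod ∣ p :=
    (Multiset.prod_X_sub_C_dvd_iff_le_roots hp R).mpr hR
  obtain ⟨w, hw⟩ := hdvd
  have hmonic : ((R.map (fun a => Polynomial.X - Polynomial.C a)).prod).Monic :=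
    Polynomial.monic_multiset_prod_of_monic _ _ (fun a _ => Polynomial.monic_X_sub_C a)
  have hw0 : w ≠ 0 := by rintro rfl; rw [mul_zero] at hw; exact hp hw
  refine ⟨w, hw, hw0, ?_, ?_, ?_⟩
  · rw [hw, Polynomial.leadingCoeff_mul, hmonic.leadingCoeff, one_mul]
  · have hrm : p.roots = R + w.roots := by
      conv_lhs => rw [hw]
      rw [Polynomial.roots_mul (hw ▸ hp), Polynomial.roots_multiset_prod_X_sub_C]
    rw [hrm, add_tsub_cancel_left]
  · have := congrArg Polynomial.natDegree hw
    rw [Polynomial.natDegree_mul (hmonic.ne_zero) hw0,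
      Polynomial.natDegree_multiset_prod_X_sub_C_eq_card] at this
    omega

lemma exists_root_of_odd {q : Polynomial ℝ} (hodd : Odd q.natDegree) :
    ∃ x, q.eval x = 0 := by
  have hq0 : q ≠ 0 := by
    intro h
    rw [h, Polynomial.natDegree_zero] at hodd
    exact (Nat.not_odd_iff_even.mpr Even.zero) hodd
  have hlcne : q.leadingCoeff ≠ 0 := Polynomial.leadingCoeff_ne_zero.mpr hq0
  rcases lt_or_gt_of_ne hlcne with hneg | hpos
  · obtain ⟨x, hx⟩ : ∃ x, (-q).eval x = 0 := by
      have hlc : 0 < (-q).leadingCoeff := by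
        rw [Polynomial.leadingCoeff_neg]; linarith
      have hq0' : (-q) ≠ 0 := fun h => hq0 (by simpa using congrArg Neg.neg h)
      have hodd' : Odd (-q).natDegree := by rwa [Polynomial.natDegree_neg]
      obtain ⟨y2, hy2a, hy2b⟩ := eventually_pos hq0' hlc 0
      obtain ⟨y1, hy1a, hy1b⟩ := eventually_neg_inf hq0' hlc y2
      have hy1neg : (-q).eval y1 < 0 := by
        rw [Odd.neg_one_pow hodd'] at hy1b
        linarith
      obtain ⟨c, _, hc0⟩ := intermediate_value_Icc hy1a ((-q).continuous.continuousOn)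
        ⟨hy1neg.le, hy2b.le⟩
      exact ⟨c, hc0⟩
    exact ⟨x, by simpa using hx⟩
  · obtain ⟨y2, hy2a, hy2b⟩ := eventually_pos hq0 hpos 0
    obtain ⟨y1, hy1a, hy1b⟩ := eventually_neg_inf hq0 hpos y2
    have hy1neg : q.eval y1 < 0 := by
      rw [Odd.neg_one_pow hodd] at hy1b
      linarith
    obtain ⟨c, _, hc0⟩ := intermediate_value_Icc hy1a (q.continuous.continuousOn)
      ⟨hy1neg.le, hy2b.le⟩
    exact ⟨c, hc0⟩

lemma roots_card_parity (p : Polynomial ℝ) (hp : p ≠ 0) :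
    ∃ k, p.natDegree = Multiset.card p.roots + 2 * k := by
  obtain ⟨q, hq, hcard, hq0⟩ := p.exists_prod_multiset_X_sub_C_mul
  have hqne : q ≠ 0 := by
    intro h
    rw [h, mul_zero] at hq
    exact hp hq.symm
  have heven : Even q.natDegree := by
    by_contra hodd
    rw [Nat.not_even_iff_odd] at hodd
    obtain ⟨x, hx⟩ := exists_root_of_odd hodd
    have : x ∈ q.roots := Polynomial.mem_roots'.mpr ⟨hqne, hx⟩
    rw [hq0] at this
    exact absurd this (Multiset.notMem_zero x)
  obtain ⟨k, hk⟩ := heven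
  exact ⟨k, by omega⟩

lemma claim1 (f g h : Polynomial ℝ)
    (hg : RealRooted g) (hh : RealRooted h)
    (hgl : 0 < g.leadingCoeff) (hhl : 0 < h.leadingCoeff)
    (hplc : 0 < (g + h).leadingCoeff)
    (hfn : f.roots.Nodup)
    (hcg : ∀ t, acnt f t ≤ acnt g t ∧ acnt g t ≤ acnt f t + 1)
    (hch : ∀ t, acnt f t ≤ acnt h t ∧ acnt h t ≤ acnt f t + 1) :
    ∀ t, acnt f t ≤ acnt (g + h) t := by
  have hp0 : (g + h) ≠ 0 := fun hz => by
    rw [hz, Polynomial.leadingCoeff_zero] at hplc; exact lt_irrefl 0 hplc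
  suffices H : ∀ k : ℕ, ∀ t : ℝ, acnt f t = k → k ≤ acnt (g + h) t by
    intro t; exact (H (acnt f t) t rfl).trans (le_refl _)
  intro k
  induction k using Nat.strong_induction_on with
  | _ k ih =>
  intro t hk
  rcases Nat.eq_zero_or_pos k with rfl | hkpos
  · omega
  have hfil : (f.roots.filter (fun x => t ≤ x)) ≠ 0 := by
    intro hemp
    rw [acnt, Multiset.countP_eq_card_filter, hemp] at hk
    simp at hk; omega
  obtain ⟨u0, hu0⟩ := Multiset.exists_mem_of_ne_zero hfil
  set N := (f.roots.filter (fun x => t ≤ x)).toFinset with hN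
  have hNne : N.Nonempty := ⟨u0, Multiset.mem_toFinset.mpr hu0⟩
  set u := N.min' hNne with hu
  have humem : u ∈ f.roots.filter (fun x => t ≤ x) :=
    Multiset.mem_toFinset.mp (N.min'_mem hNne)
  have hufr : u ∈ f.roots := (Multiset.mem_filter.mp humem).1
  have htu : t ≤ u := (Multiset.mem_filter.mp humem).2
  have humin : ∀ x ∈ f.roots, t ≤ x → u ≤ x := fun x hx htx =>
    N.min'_le x (Multiset.mem_toFinset.mpr (Multiset.mem_filter.mpr ⟨hx, htx⟩))
  have hfu : acnt f u = k := by
    have hfe : f.roots.filter (fun x => u ≤ x) = f.roots.filter (fun x => t ≤ x) :=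
      Multiset.filter_congr (fun x hx =>
        ⟨fun hux => le_trans htu hux, fun htx => humin x hx htx⟩)
    rw [← hk, acnt, acnt, Multiset.countP_eq_card_filter, Multiset.countP_eq_card_filter, hfe]
  suffices hgoal : k ≤ acnt (g + h) u by
    exact le_trans hgoal (acnt_mono _ htu)
  obtain ⟨s, hus, hgap⟩ := gap_above (f.roots + g.roots + h.roots + (g + h).roots) u
  have hgapf : ∀ x ∈ f.roots, x ≤ u ∨ s < x := fun x hx => hgap x (by simp [hx])
  have hgapg : ∀ x ∈ g.roots, x ≤ u ∨ s < x := fun x hx => hgap x (by simp [hx])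
  have hgaph : ∀ x ∈ h.roots, x ≤ u ∨ s < x := fun x hx => hgap x (by simp [hx])
  have hgapp : ∀ x ∈ (g + h).roots, x ≤ u ∨ s < x := fun x hx => hgap x (by simp [hx])
  have hsplitf : acnt f u = f.roots.count u + acnt f s := countP_split_above f.roots hus hgapf
  have hcount1 : f.roots.count u = 1 := Multiset.count_eq_one_of_mem hfn hufr
  have hfs : acnt f s = k - 1 := by omega
  have hihs : k - 1 ≤ acnt (g + h) s := ih (k - 1) (by omega) s hfs
  by_contra hcon
  push_neg at hcon
  have hsplitp : acnt (g + h) u = (g + h).roots.count u + acnt (g + h) s :=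
    countP_split_above (g + h).roots hus hgapp
  have hpucount : (g + h).roots.count u = 0 := by omega
  have hps : acnt (g + h) s = k - 1 := by omega
  have hunotp : u ∉ (g + h).roots := Multiset.count_eq_zero.mp hpucount
  set R := (g + h).roots.filter (fun x => s ≤ x) with hR
  have hRcard : Multiset.card R = k - 1 := by
    rw [hR, ← Multiset.countP_eq_card_filter]
    exact hps
  obtain ⟨w, hwfact, hw0, hwlc, hwroots, hwdeg⟩ :=
    factor_out (g + h) hp0 R (Multiset.filter_le _ _)
  have hwroots2 : w.roots = (g + h).roots.filter (fun x => ¬ s ≤ x) := by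
    rw [hwroots, hR]
    ext a
    rw [Multiset.count_sub, Multiset.count_filter, Multiset.count_filter]
    by_cases hsa : s ≤ a
    · simp [hsa]
    · simp [hsa]
  have hwnr : ∀ z ∈ w.roots, z < u := by
    intro z hz
    rw [hwroots2] at hz
    obtain ⟨hzp, hzs⟩ := Multiset.mem_filter.mp hz
    rcases hgapp z hzp with hzu | hsz
    · rcases lt_or_eq_of_le hzu with hlt | heq
      · exact hlt
      · exact absurd (heq ▸ hzp) hunotp
    · exact absurd hsz.le hzs
  have hwu : 0 < w.eval u := pos_of_no_roots_ge hw0 (hwlc ▸ hplc) hwnr u (le_refl u)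
  have hevalp : (g + h).eval u = (R.map (fun a => u - a)).prod * w.eval u := by
    conv_lhs => rw [hwfact]
    rw [Polynomial.eval_mul, Polynomial.eval_multiset_prod, Multiset.map_map]
    congr 1
    exact congrArg Multiset.prod (Multiset.map_congr rfl (fun a _ => by simp))
  have hprodsign : 0 < (-1 : ℝ) ^ (k - 1) * (R.map (fun a => u - a)).prod := by
    have hneg : ∀ x ∈ R.map (fun a => u - a), x < 0 := by
      intro x hx
      obtain ⟨a, ha, rfl⟩ := Multiset.mem_map.mp hx
      have hsa : s ≤ a := (Multiset.mem_filter.mp ha).2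
      linarith
    have := prod_neg_sign _ hneg
    rwa [Multiset.card_map, hRcard] at this
  have hpos : 0 < (-1 : ℝ) ^ (k - 1) * (g + h).eval u := by
    rw [hevalp]
    calc (0:ℝ) < ((-1 : ℝ) ^ (k - 1) * (R.map (fun a => u - a)).prod) * w.eval u :=
          mul_pos hprodsign hwu
      _ = (-1 : ℝ) ^ (k - 1) * ((R.map (fun a => u - a)).prod * w.eval u) := by ring
  have key : ∀ q : Polynomial ℝ, RealRooted q → 0 < q.leadingCoeff →
      (∀ x ∈ q.roots, x ≤ u ∨ s < x) →
      (∀ t', acnt f t' ≤ acnt q t' ∧ acnt q t' ≤ acnt f t' + 1) →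
      (-1 : ℝ) ^ (k - 1) * q.eval u ≤ 0 := by
    intro q hq hql hgapq hcq
    by_cases huq : u ∈ q.roots
    · rw [(Polynomial.mem_roots'.mp huq).2, mul_zero]
    · have hsplitq : acnt q u = q.roots.count u + acnt q s :=
        countP_split_above q.roots hus hgapq
      have hqz : q.roots.count u = 0 := Multiset.count_eq_zero.mpr huq
      have h1 : k ≤ acnt q u := hfu ▸ (hcq u).1
      have h2 : acnt q s ≤ acnt f s + 1 := (hcq s).2
      have h3 : acnt q s = k := by omega
      have hexp : q.roots.countP (fun x => u < x) = k := by
        rw [← h3, acnt, Multiset.countP_eq_card_filter, Multiset.countP_eq_card_filter]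
        congr 1
        refine Multiset.filter_congr (fun x hx => ?_)
        constructor
        · intro hux
          rcases hgapq x hx with hc | hc
          · exact absurd hux (not_lt.mpr hc)
          · exact hc.le
        · intro hsx
          exact lt_of_lt_of_le hus hsx
      have hse := sign_eval hq hql huq
      rw [hexp] at hse
      have hrel : (-1 : ℝ) ^ (k - 1) * q.eval u = -((-1 : ℝ) ^ k * q.eval u) := by
        conv_rhs => rw [show k = (k - 1) + 1 by omega]
        rw [pow_succ]
        ring
      rw [hrel]
      linarith
  have hgs := key g hg hgl hgapg hcg
  have hhs := key h hh hhl hgaph hch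
  have hsum : (-1 : ℝ) ^ (k - 1) * (g + h).eval u
      = (-1 : ℝ) ^ (k - 1) * g.eval u + (-1 : ℝ) ^ (k - 1) * h.eval u := by
    rw [Polynomial.eval_add]; ring
  linarith

lemma acnt_eq_gt (q : Polynomial ℝ) {s s' : ℝ} (hss' : s < s')
    (hgap : ∀ x ∈ q.roots, x ≤ s ∨ s' < x) :
    acnt q s' = q.roots.countP (fun x => s < x) := by
  rw [acnt, Multiset.countP_eq_card_filter, Multiset.countP_eq_card_filter]
  congr 1
  refine Multiset.filter_congr (fun x hx => ?_)
  constructor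
  · intro hx'; exact lt_of_lt_of_le hss' hx'
  · intro hsx
    rcases hgap x hx with hc | hc
    · exact absurd hsx (not_lt.mpr hc)
    · exact hc.le

lemma claim2 (f g h : Polynomial ℝ)
    (hf : RealRooted f) (hg : RealRooted g) (hh : RealRooted h)
    (hgl : 0 < g.leadingCoeff) (hhl : 0 < h.leadingCoeff)
    (hplc : 0 < (g + h).leadingCoeff)
    (hfn : f.roots.Nodup)
    (hdg : g.natDegree = f.natDegree ∨ g.natDegree = f.natDegree + 1)
    (hdh : h.natDegree = f.natDegree ∨ h.natDegree = f.natDegree + 1)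
    (hdp : (g + h).natDegree = f.natDegree ∨ (g + h).natDegree = f.natDegree + 1)
    (hrp : RealRooted (g + h))
    (hcg : ∀ t, acnt f t ≤ acnt g t ∧ acnt g t ≤ acnt f t + 1)
    (hch : ∀ t, acnt f t ≤ acnt h t ∧ acnt h t ≤ acnt f t + 1) :
    ∀ t, lcnt f t + ((g + h).natDegree - f.natDegree) ≤ lcnt (g + h) t + 1 := by
  set n := f.natDegree with hn
  have hp0 : (g + h) ≠ 0 := fun hz => by
    rw [hz, Polynomial.leadingCoeff_zero] at hplc; exact lt_irrefl 0 hplc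
  -- translated hypotheses for g and h (lcnt form)
  have HL : ∀ q : Polynomial ℝ, RealRooted q →
      (q.natDegree = n ∨ q.natDegree = n + 1) →
      (∀ t', acnt f t' ≤ acnt q t' ∧ acnt q t' ≤ acnt f t' + 1) →
      ∀ s, lcnt f s + (q.natDegree - n) ≤ lcnt q s + 1 ∧
        lcnt q s ≤ lcnt f s + (q.natDegree - n) := by
    intro q hq hdq hcq s
    obtain ⟨s', hss', hgap⟩ := gap_above (f.roots + q.roots) s
    have hgapf : ∀ x ∈ f.roots, x ≤ s ∨ s' < x := fun x hx => hgap x (by simp [hx])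
    have hgapq : ∀ x ∈ q.roots, x ≤ s ∨ s' < x := fun x hx => hgap x (by simp [hx])
    have c1 : lcnt f s + acnt f s' = n := by
      rw [acnt_eq_gt f hss' hgapf, lcnt, hn, ← hf]
      exact countP_compl f.roots s
    have c2 : lcnt q s + acnt q s' = q.natDegree := by
      rw [acnt_eq_gt q hss' hgapq, lcnt, ← hq]
      exact countP_compl q.roots s
    have b1 := (hcq s').1
    have b2 := (hcq s').2
    omega
  have HLg := HL g hg hdg hcg
  have HLh := HL h hh hdh hch
  suffices H : ∀ m : ℕ, ∀ t : ℝ, lcnt f t = m → m + ((g + h).natDegree - n) ≤ lcnt (g + h) t + 1 by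
    intro t; exact H (lcnt f t) t rfl
  intro m
  induction m using Nat.strong_induction_on with
  | _ m ih =>
  intro t hm
  rcases Nat.eq_zero_or_pos m with rfl | hmpos
  · omega
  have hfil : (f.roots.filter (fun x => x ≤ t)) ≠ 0 := by
    intro hemp
    rw [lcnt, Multiset.countP_eq_card_filter, hemp] at hm
    simp at hm; omega
  obtain ⟨u0, hu0⟩ := Multiset.exists_mem_of_ne_zero hfil
  set N := (f.roots.filter (fun x => x ≤ t)).toFinset with hN
  have hNne : N.Nonempty := ⟨u0, Multiset.mem_toFinset.mpr hu0⟩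
  set u := N.max' hNne with hu
  have humem : u ∈ f.roots.filter (fun x => x ≤ t) :=
    Multiset.mem_toFinset.mp (N.max'_mem hNne)
  have hufr : u ∈ f.roots := (Multiset.mem_filter.mp humem).1
  have htu : u ≤ t := (Multiset.mem_filter.mp humem).2
  have humax : ∀ x ∈ f.roots, x ≤ t → x ≤ u := fun x hx htx =>
    N.le_max' x (Multiset.mem_toFinset.mpr (Multiset.mem_filter.mpr ⟨hx, htx⟩))
  have hfu : lcnt f u = m := by
    have hfe : f.roots.filter (fun x => x ≤ u) = f.roots.filter (fun x => x ≤ t) :=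
      Multiset.filter_congr (fun x hx =>
        ⟨fun hxu => le_trans hxu htu, fun hxt => humax x hx hxt⟩)
    rw [← hm, lcnt, lcnt, Multiset.countP_eq_card_filter, Multiset.countP_eq_card_filter, hfe]
  suffices hgoal : m + ((g + h).natDegree - n) ≤ lcnt (g + h) u + 1 by
    exact le_trans hgoal (by have := lcnt_mono (g + h) htu; omega)
  obtain ⟨s, hsu, hgap⟩ := gap_below (f.roots + g.roots + h.roots + (g + h).roots) u
  have hgapf : ∀ x ∈ f.roots, u ≤ x ∨ x < s := fun x hx => hgap x (by simp [hx])
  have hgapg : ∀ x ∈ g.roots, u ≤ x ∨ x < s := fun x hx => hgap x (by simp [hx])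
  have hgaph : ∀ x ∈ h.roots, u ≤ x ∨ x < s := fun x hx => hgap x (by simp [hx])
  have hgapp : ∀ x ∈ (g + h).roots, u ≤ x ∨ x < s := fun x hx => hgap x (by simp [hx])
  have hsplitf : lcnt f u = f.roots.count u + lcnt f s := countP_split_below f.roots hsu hgapf
  have hcount1 : f.roots.count u = 1 := Multiset.count_eq_one_of_mem hfn hufr
  have hfs : lcnt f s = m - 1 := by omega
  have hihs := ih (m - 1) (by omega) s hfs
  by_contra hcon
  push_neg at hcon
  have hsplitp : lcnt (g + h) u = (g + h).roots.count u + lcnt (g + h) s :=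
    countP_split_below (g + h).roots hsu hgapp
  have hdpval : (g + h).natDegree = n ∨ (g + h).natDegree = n + 1 := hdp
  have hpucount : (g + h).roots.count u = 0 := by omega
  have hunotp : u ∉ (g + h).roots := Multiset.count_eq_zero.mp hpucount
  have hmlen : m ≤ n := by
    have : lcnt f u ≤ Multiset.card f.roots := Multiset.countP_le_card _ _
    rw [hf] at this; omega
  set R := (g + h).roots.filter (fun x => x ≤ s) with hR
  have hRcard : Multiset.card R = lcnt (g + h) s := by
    rw [hR, ← Multiset.countP_eq_card_filter]; rfl
  obtain ⟨w, hwfact, hw0, hwlc, hwroots, hwdeg⟩ :=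
    factor_out (g + h) hp0 R (Multiset.filter_le _ _)
  have hwroots2 : w.roots = (g + h).roots.filter (fun x => ¬ x ≤ s) := by
    rw [hwroots, hR]
    ext a
    rw [Multiset.count_sub, Multiset.count_filter, Multiset.count_filter]
    by_cases hsa : a ≤ s
    · simp [hsa]
    · simp [hsa]
  have hwnr : ∀ z ∈ w.roots, u < z := by
    intro z hz
    rw [hwroots2] at hz
    obtain ⟨hzp, hzs⟩ := Multiset.mem_filter.mp hz
    rcases hgapp z hzp with hzu | hsz
    · rcases lt_or_eq_of_le hzu with hlt | heq
      · exact hlt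
      · exact absurd hzp (heq ▸ hunotp)
    · exact absurd hsz.le hzs
  have hwu : 0 < (-1 : ℝ) ^ w.natDegree * w.eval u :=
    pos_of_no_roots_le hw0 (hwlc ▸ hplc) hwnr u (le_refl u)
  have hcardle : lcnt (g + h) s ≤ (g + h).natDegree := by
    have h1 : lcnt (g + h) s ≤ Multiset.card (g + h).roots := Multiset.countP_le_card _ _
    rw [hrp] at h1; exact h1
  have hdw : w.natDegree = (n - m) + 2 := by
    rw [hwdeg, hRcard]
    omega
  have hevalp : (g + h).eval u = (R.map (fun a => u - a)).prod * w.eval u := by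
    conv_lhs => rw [hwfact]
    rw [Polynomial.eval_mul, Polynomial.eval_multiset_prod, Multiset.map_map]
    congr 1
    exact congrArg Multiset.prod (Multiset.map_congr rfl (fun a _ => by simp))
  have hprodsign : 0 < (R.map (fun a => u - a)).prod := by
    apply prod_pos_of_pos
    intro x hx
    obtain ⟨a, ha, rfl⟩ := Multiset.mem_map.mp hx
    have hsa : a ≤ s := (Multiset.mem_filter.mp ha).2
    linarith
  have hpos : 0 < (-1 : ℝ) ^ ((n - m) + 2) * (g + h).eval u := by
    rw [hevalp, ← hdw]
    calc (0:ℝ) < (R.map (fun a => u - a)).prod * ((-1 : ℝ) ^ w.natDegree * w.eval u) :=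
          mul_pos hprodsign hwu
      _ = (-1 : ℝ) ^ w.natDegree * ((R.map (fun a => u - a)).prod * w.eval u) := by ring
  have key : ∀ q : Polynomial ℝ, RealRooted q → 0 < q.leadingCoeff →
      (q.natDegree = n ∨ q.natDegree = n + 1) →
      (∀ x ∈ q.roots, u ≤ x ∨ x < s) →
      (∀ s', lcnt f s' + (q.natDegree - n) ≤ lcnt q s' + 1 ∧
        lcnt q s' ≤ lcnt f s' + (q.natDegree - n)) →
      (-1 : ℝ) ^ ((n - m) + 2) * q.eval u ≤ 0 := by
    intro q hq hql hdq hgapq hLq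
    by_cases huq : u ∈ q.roots
    · rw [(Polynomial.mem_roots'.mp huq).2, mul_zero]
    · have hsplitq : lcnt q u = q.roots.count u + lcnt q s :=
        countP_split_below q.roots hsu hgapq
      have hqz : q.roots.count u = 0 := Multiset.count_eq_zero.mpr huq
      have hLu := hLq u
      have hLs := hLq s
      have hcompl := countP_compl q.roots u
      have hqcard : Multiset.card q.roots = q.natDegree := hq
      have hexp : q.roots.countP (fun x => u < x) = (n - m) + 1 := by
        have hlq : lcnt q u = q.roots.countP (fun x => x ≤ u) := rfl
        omega
      have hse := sign_eval hq hql huq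
      rw [hexp] at hse
      have hrel : (-1 : ℝ) ^ ((n - m) + 2) * q.eval u
          = -((-1 : ℝ) ^ ((n - m) + 1) * q.eval u) := by
        rw [pow_succ]
        ring
      rw [hrel]
      linarith
  have hgs := key g hg hgl hdg hgapg HLg
  have hhs := key h hh hhl hdh hgaph HLh
  have hsum : (-1 : ℝ) ^ ((n - m) + 2) * (g + h).eval u
      = (-1 : ℝ) ^ ((n - m) + 2) * g.eval u + (-1 : ℝ) ^ ((n - m) + 2) * h.eval u := by
    rw [Polynomial.eval_add]; ring
  linarith

lemma deg_lc_add (g h : Polynomial ℝ) (hgl : 0 < g.leadingCoeff) (hhl : 0 < h.leadingCoeff) :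
    0 < (g + h).leadingCoeff ∧ (g + h).natDegree = max g.natDegree h.natDegree := by
  rcases lt_trichotomy g.natDegree h.natDegree with hlt | heq | hgt
  · have hdeg : g.degree < h.degree := Polynomial.degree_lt_degree hlt
    constructor
    · rw [Polynomial.leadingCoeff_add_of_degree_lt hdeg]; exact hhl
    · rw [Polynomial.natDegree_add_eq_right_of_natDegree_lt hlt]; omega
  · have hco : (g + h).coeff g.natDegree = g.leadingCoeff + h.leadingCoeff := by
      rw [Polynomial.coeff_add, Polynomial.leadingCoeff, Polynomial.leadingCoeff, heq]
    have hne : (g + h).coeff g.natDegree ≠ 0 := by rw [hco]; positivity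
    have hge : g.natDegree ≤ (g + h).natDegree := Polynomial.le_natDegree_of_ne_zero hne
    have hle : (g + h).natDegree ≤ g.natDegree := by
      have := Polynomial.natDegree_add_le g h
      omega
    have hdeq : (g + h).natDegree = g.natDegree := le_antisymm hle hge
    constructor
    · rw [Polynomial.leadingCoeff, hdeq, hco]; positivity
    · omega
  · have hdeg : h.degree < g.degree := Polynomial.degree_lt_degree hgt
    constructor
    · rw [add_comm, Polynomial.leadingCoeff_add_of_degree_lt hdeg]; exact hgl
    · rw [add_comm, Polynomial.natDegree_add_eq_right_of_natDegree_lt hgt]; omega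

lemma rr_add (f g h : Polynomial ℝ)
    (hf : RealRooted f) (hg : RealRooted g) (hh : RealRooted h)
    (hgl : 0 < g.leadingCoeff) (hhl : 0 < h.leadingCoeff)
    (hplc : 0 < (g + h).leadingCoeff)
    (hfn : f.roots.Nodup)
    (hdp : (g + h).natDegree = f.natDegree ∨ (g + h).natDegree = f.natDegree + 1)
    (hcg : ∀ t, acnt f t ≤ acnt g t ∧ acnt g t ≤ acnt f t + 1)
    (hch : ∀ t, acnt f t ≤ acnt h t ∧ acnt h t ≤ acnt f t + 1) :
    RealRooted (g + h) := by
  have hp0 : (g + h) ≠ 0 := fun hz => by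
    rw [hz, Polynomial.leadingCoeff_zero] at hplc; exact lt_irrefl 0 hplc
  obtain ⟨t, ht⟩ := exists_lb (f.roots + (g + h).roots)
  have htf : ∀ x ∈ f.roots, t ≤ x := fun x hx => ht x (by simp [hx])
  have htp : ∀ x ∈ (g + h).roots, t ≤ x := fun x hx => ht x (by simp [hx])
  have haf : acnt f t = f.natDegree := by
    rw [acnt, ← hf]
    exact Multiset.countP_eq_card.mpr htf
  have h1 : f.natDegree ≤ acnt (g + h) t := by
    rw [← haf]; exact claim1 f g h hg hh hgl hhl hplc hfn hcg hch t
  have h2 : acnt (g + h) t ≤ Multiset.card (g + h).roots := Multiset.countP_le_card _ _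
  have h3 : Multiset.card (g + h).roots ≤ (g + h).natDegree := Polynomial.card_roots' _
  obtain ⟨k, hk⟩ := roots_card_parity (g + h) hp0
  rw [RealRooted]
  omega

lemma core (n : ℕ) : ∀ f g h : Polynomial ℝ, f.natDegree = n →
    RealRooted f → RealRooted g → RealRooted h →
    0 < g.leadingCoeff → 0 < h.leadingCoeff →
    (g.natDegree = f.natDegree ∨ g.natDegree = f.natDegree + 1) →
    (h.natDegree = f.natDegree ∨ h.natDegree = f.natDegree + 1) →
    (∀ t, acnt f t ≤ acnt g t ∧ acnt g t ≤ acnt f t + 1) →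
    (∀ t, acnt f t ≤ acnt h t ∧ acnt h t ≤ acnt f t + 1) →
    RealRooted (g + h) ∧ (∀ t, acnt f t ≤ acnt (g + h) t ∧ acnt (g + h) t ≤ acnt f t + 1) := by
  induction n using Nat.strong_induction_on with
  | _ n ih =>
  intro f g h hfd hf hg hh hgl hhl hdg hdh hcg hch
  obtain ⟨hplc, hmax⟩ := deg_lc_add g h hgl hhl
  have hdp : (g + h).natDegree = f.natDegree ∨ (g + h).natDegree = f.natDegree + 1 := by
    rcases hdg with h1 | h1 <;> rcases hdh with h2 | h2 <;> rw [hmax, h1, h2] <;> simp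
  have hp0 : (g + h) ≠ 0 := fun hz => by
    rw [hz, Polynomial.leadingCoeff_zero] at hplc; exact lt_irrefl 0 hplc
  by_cases hfn : f.roots.Nodup
  · -- no repeated roots of f
    have hrr : RealRooted (g + h) := rr_add f g h hf hg hh hgl hhl hplc hfn hdp hcg hch
    refine ⟨hrr, fun t => ⟨claim1 f g h hg hh hgl hhl hplc hfn hcg hch t, ?_⟩⟩
    obtain ⟨s, hst, hgap⟩ := gap_below (f.roots + (g + h).roots) t
    have hgapf : ∀ x ∈ f.roots, t ≤ x ∨ x < s := fun x hx => hgap x (by simp [hx])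
    have hgapp : ∀ x ∈ (g + h).roots, t ≤ x ∨ x < s := fun x hx => hgap x (by simp [hx])
    have hef : f.roots.countP (fun x => t ≤ x) = f.roots.countP (fun x => s < x) := by
      rw [Multiset.countP_eq_card_filter, Multiset.countP_eq_card_filter]
      congr 1
      refine Multiset.filter_congr (fun x hx => ?_)
      constructor
      · intro h1; exact lt_of_lt_of_le hst h1
      · intro h1
        rcases hgapf x hx with hc | hc
        · exact hc
        · exact absurd h1 (not_lt.mpr hc.le)
    have hep : (g + h).roots.countP (fun x => t ≤ x) = (g + h).roots.countP (fun x => s < x) := by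
      rw [Multiset.countP_eq_card_filter, Multiset.countP_eq_card_filter]
      congr 1
      refine Multiset.filter_congr (fun x hx => ?_)
      constructor
      · intro h1; exact lt_of_lt_of_le hst h1
      · intro h1
        rcases hgapp x hx with hc | hc
        · exact hc
        · exact absurd h1 (not_lt.mpr hc.le)
    have hccf := countP_compl f.roots s
    have hccp := countP_compl (g + h).roots s
    have haf : acnt f t = f.roots.countP (fun x => s < x) := by rw [acnt, hef]
    have hap : acnt (g + h) t = (g + h).roots.countP (fun x => s < x) := by rw [acnt, hep]
    have hlf : lcnt f s = f.roots.countP (fun x => x ≤ s) := rfl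
    have hlp : lcnt (g + h) s = (g + h).roots.countP (fun x => x ≤ s) := rfl
    have hcardf : Multiset.card f.roots = f.natDegree := hf
    have hcardp : Multiset.card (g + h).roots = (g + h).natDegree := hrr
    have hc2 := claim2 f g h hf hg hh hgl hhl hplc hfn hdg hdh hdp hrr hcg hch s
    omega
  · -- f has a repeated root : strip it
    rw [Multiset.nodup_iff_count_le_one] at hfn
    push_neg at hfn
    obtain ⟨a, ha2⟩ := hfn
    have haf : a ∈ f.roots := Multiset.count_pos.mp (by omega)
    have hf0 : f ≠ 0 := by
      intro hz; rw [hz, Polynomial.roots_zero] at ha2; simp at ha2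
    have hg0 : g ≠ 0 := fun hz => by
      rw [hz, Polynomial.leadingCoeff_zero] at hgl; exact lt_irrefl 0 hgl
    have hh0 : h ≠ 0 := fun hz => by
      rw [hz, Polynomial.leadingCoeff_zero] at hhl; exact lt_irrefl 0 hhl
    have hn2 : 2 ≤ n := by
      have hcc := Multiset.count_le_card a f.roots
      rw [RealRooted] at hf
      omega
    obtain ⟨s, hts, hgap⟩ := gap_above (f.roots + g.roots + h.roots) a
    have hgapf : ∀ x ∈ f.roots, x ≤ a ∨ s < x := fun x hx => hgap x (by simp [hx])
    have hgapg : ∀ x ∈ g.roots, x ≤ a ∨ s < x := fun x hx => hgap x (by simp [hx])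
    have hgaph : ∀ x ∈ h.roots, x ≤ a ∨ s < x := fun x hx => hgap x (by simp [hx])
    have hsf : acnt f a = f.roots.count a + acnt f s := countP_split_above f.roots hts hgapf
    have keymem : ∀ q : Polynomial ℝ, (∀ x ∈ q.roots, x ≤ a ∨ s < x) →
        (∀ t', acnt f t' ≤ acnt q t' ∧ acnt q t' ≤ acnt f t' + 1) → a ∈ q.roots := by
      intro q hgapq hcq
      have hsq : acnt q a = q.roots.count a + acnt q s := countP_split_above q.roots hts hgapq
      have h1 := (hcq a).1
      have h2 := (hcq s).2
      exact Multiset.count_pos.mp (by omega)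
    have hag := keymem g hgapg hcg
    have hah := keymem h hgaph hch
    obtain ⟨f₁, hf1⟩ := Polynomial.dvd_iff_isRoot.mpr ((Polynomial.mem_roots'.mp haf).2)
    obtain ⟨g₁, hg1⟩ := Polynomial.dvd_iff_isRoot.mpr ((Polynomial.mem_roots'.mp hag).2)
    obtain ⟨h₁, hh1⟩ := Polynomial.dvd_iff_isRoot.mpr ((Polynomial.mem_roots'.mp hah).2)
    have hXne : (Polynomial.X - Polynomial.C a) ≠ 0 := Polynomial.X_sub_C_ne_zero a
    have hf10 : f₁ ≠ 0 := fun hz => hf0 (by rw [hf1, hz, mul_zero])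
    have hg10 : g₁ ≠ 0 := fun hz => hg0 (by rw [hg1, hz, mul_zero])
    have hh10 : h₁ ≠ 0 := fun hz => hh0 (by rw [hh1, hz, mul_zero])
    have hfr : f.roots = a ::ₘ f₁.roots := by
      rw [hf1, Polynomial.roots_mul (by rw [← hf1]; exact hf0), Polynomial.roots_X_sub_C,
        Multiset.singleton_add]
    have hgr : g.roots = a ::ₘ g₁.roots := by
      rw [hg1, Polynomial.roots_mul (by rw [← hg1]; exact hg0), Polynomial.roots_X_sub_C,
        Multiset.singleton_add]
    have hhr : h.roots = a ::ₘ h₁.roots := by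
      rw [hh1, Polynomial.roots_mul (by rw [← hh1]; exact hh0), Polynomial.roots_X_sub_C,
        Multiset.singleton_add]
    have hfdeg : f.natDegree = f₁.natDegree + 1 := by
      rw [hf1, Polynomial.natDegree_mul hXne hf10, Polynomial.natDegree_X_sub_C]; omega
    have hgdeg : g.natDegree = g₁.natDegree + 1 := by
      rw [hg1, Polynomial.natDegree_mul hXne hg10, Polynomial.natDegree_X_sub_C]; omega
    have hhdeg : h.natDegree = h₁.natDegree + 1 := by
      rw [hh1, Polynomial.natDegree_mul hXne hh10, Polynomial.natDegree_X_sub_C]; omega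
    have hf1r : RealRooted f₁ := by
      have hcard := hf
      rw [RealRooted, hfr, Multiset.card_cons] at hcard
      rw [RealRooted]; omega
    have hg1r : RealRooted g₁ := by
      have hcard := hg
      rw [RealRooted, hgr, Multiset.card_cons] at hcard
      rw [RealRooted]; omega
    have hh1r : RealRooted h₁ := by
      have hcard := hh
      rw [RealRooted, hhr, Multiset.card_cons] at hcard
      rw [RealRooted]; omega
    have hg1l : 0 < g₁.leadingCoeff := by
      have hl : g.leadingCoeff = g₁.leadingCoeff := by
        rw [hg1, Polynomial.leadingCoeff_mul, (Polynomial.monic_X_sub_C a).leadingCoeff, one_mul]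
      rwa [hl] at hgl
    have hh1l : 0 < h₁.leadingCoeff := by
      have hl : h.leadingCoeff = h₁.leadingCoeff := by
        rw [hh1, Polynomial.leadingCoeff_mul, (Polynomial.monic_X_sub_C a).leadingCoeff, one_mul]
      rwa [hl] at hhl
    have hdg1 : g₁.natDegree = f₁.natDegree ∨ g₁.natDegree = f₁.natDegree + 1 := by omega
    have hdh1 : h₁.natDegree = f₁.natDegree ∨ h₁.natDegree = f₁.natDegree + 1 := by omega
    have hcntf : ∀ t', acnt f t' = acnt f₁ t' + (if t' ≤ a then 1 else 0) := by
      intro t'; rw [acnt, acnt, hfr, Multiset.countP_cons]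
    have hcntg : ∀ t', acnt g t' = acnt g₁ t' + (if t' ≤ a then 1 else 0) := by
      intro t'; rw [acnt, acnt, hgr, Multiset.countP_cons]
    have hcnth : ∀ t', acnt h t' = acnt h₁ t' + (if t' ≤ a then 1 else 0) := by
      intro t'; rw [acnt, acnt, hhr, Multiset.countP_cons]
    have hcg1 : ∀ t', acnt f₁ t' ≤ acnt g₁ t' ∧ acnt g₁ t' ≤ acnt f₁ t' + 1 := by
      intro t'
      have h1 := (hcg t').1
      have h2 := (hcg t').2
      rw [hcntf t', hcntg t'] at h1 h2
      by_cases hta : t' ≤ a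
      · simp [hta] at h1 h2; omega
      · simp [hta] at h1 h2; omega
    have hch1 : ∀ t', acnt f₁ t' ≤ acnt h₁ t' ∧ acnt h₁ t' ≤ acnt f₁ t' + 1 := by
      intro t'
      have h1 := (hch t').1
      have h2 := (hch t').2
      rw [hcntf t', hcnth t'] at h1 h2
      by_cases hta : t' ≤ a
      · simp [hta] at h1 h2; omega
      · simp [hta] at h1 h2; omega
    obtain ⟨hrr1, hc1⟩ := ih (n - 1) (by omega) f₁ g₁ h₁ (by omega) hf1r hg1r hh1r
      hg1l hh1l hdg1 hdh1 hcg1 hch1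
    have hp1 : g + h = (Polynomial.X - Polynomial.C a) * (g₁ + h₁) := by
      rw [hg1, hh1]; ring
    have hp10 : (g₁ + h₁) ≠ 0 := fun hz => hp0 (by rw [hp1, hz, mul_zero])
    have hpr : (g + h).roots = a ::ₘ (g₁ + h₁).roots := by
      rw [hp1, Polynomial.roots_mul (by rw [← hp1]; exact hp0), Polynomial.roots_X_sub_C,
        Multiset.singleton_add]
    have hpdeg : (g + h).natDegree = (g₁ + h₁).natDegree + 1 := by
      rw [hp1, Polynomial.natDegree_mul hXne hp10, Polynomial.natDegree_X_sub_C]; omega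
    constructor
    · rw [RealRooted, hpr, Multiset.card_cons, hpdeg]
      rw [RealRooted] at hrr1
      omega
    · intro t'
      have hcp' : acnt (g + h) t' = acnt (g₁ + h₁) t' + (if t' ≤ a then 1 else 0) := by
        rw [acnt, acnt, hpr, Multiset.countP_cons]
      have hct := hc1 t'
      rw [hcntf t', hcp']
      by_cases hta : t' ≤ a
      · simp [hta]; omega
      · simp [hta]; omega

theorem stmt0 (f g h : Polynomial ℝ)
    (hf : RealRooted f) (hg : RealRooted g) (hh : RealRooted h)
    (hf' : ∀ i, 0 ≤ f.coeff i) (hg' : ∀ i, 0 ≤ g.coeff i) (hh' : ∀ i, 0 ≤ h.coeff i)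
    (hfg : Interlaces f g) (hfh : Interlaces f h) :
    Interlaces f (g + h) := by
  rcases eq_or_ne g 0 with rfl | hg0
  · rw [zero_add]; exact hfh
  rcases eq_or_ne h 0 with rfl | hh0
  · rw [add_zero]; exact hfg
  have hgl : 0 < g.leadingCoeff :=
    lt_of_le_of_ne (hg' g.natDegree) (Ne.symm (Polynomial.leadingCoeff_ne_zero.mpr hg0))
  have hhl : 0 < h.leadingCoeff :=
    lt_of_le_of_ne (hh' h.natDegree) (Ne.symm (Polynomial.leadingCoeff_ne_zero.mpr hh0))
  obtain ⟨hfR, hgR, hdg, hcg⟩ := (interlaces_iff f g).mp hfg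
  obtain ⟨_, hhR, hdh, hch⟩ := (interlaces_iff f h).mp hfh
  obtain ⟨hrr, hcp⟩ := core f.natDegree f g h rfl hfR hgR hhR hgl hhl hdg hdh hcg hch
  obtain ⟨hplc, hmax⟩ := deg_lc_add g h hgl hhl
  refine (interlaces_iff f (g + h)).mpr ⟨hfR, hrr, ?_, hcp⟩
  rcases hdg with h1 | h1 <;> rcases hdh with h2 | h2 <;> rw [hmax, h1, h2] <;> simp
end

section
/- If f, g, and h are real-rooted polynomials with nonnegative coefficients such that f interlaces g and h interlaces g, then f + h interlaces g. -/
open Polynomial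

namespace IlAux

noncomputable def nLE (p : Polynomial ℝ) (x : ℝ) : ℕ := p.roots.countP (· ≤ x)
noncomputable def nLT (p : Polynomial ℝ) (x : ℝ) : ℕ := p.roots.countP (· < x)
noncomputable def nGT (p : Polynomial ℝ) (x : ℝ) : ℕ := p.roots.countP (x < ·)
noncomputable def nGE (p : Polynomial ℝ) (x : ℝ) : ℕ := p.roots.countP (x ≤ ·)




lemma countP_split (s : Multiset ℝ) (t : ℝ) :
    s.countP (· ≤ t) = s.countP (· < t) + s.count t := by
  induction s using Multiset.induction with
  | empty => simp
  | cons a s ih =>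
    rw [Multiset.countP_cons, Multiset.countP_cons, Multiset.count_cons]
    rcases lt_trichotomy a t with h | h | h
    · rw [if_pos h.le, if_pos h, if_neg (fun e : t = a => absurd e.symm h.ne)]; omega
    · subst h; rw [if_pos le_rfl, if_neg (lt_irrefl a), if_pos rfl]; omega
    · rw [if_neg h.not_ge, if_neg h.not_gt, if_neg (fun e : t = a => absurd e.symm h.ne')]; omega

lemma countP_split' (s : Multiset ℝ) (t : ℝ) :
    s.countP (t ≤ ·) = s.countP (t < ·) + s.count t := by
  induction s using Multiset.induction with
  | empty => simp
  | cons a s ih =>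
    rw [Multiset.countP_cons, Multiset.countP_cons, Multiset.count_cons]
    rcases lt_trichotomy t a with h | h | h
    · rw [if_pos h.le, if_pos h, if_neg (fun e : t = a => absurd e h.ne)]; omega
    · subst h; rw [if_pos le_rfl, if_neg (lt_irrefl t), if_pos rfl]; omega
    · rw [if_neg h.not_ge, if_neg h.not_gt, if_neg (fun e : t = a => absurd e h.ne')]; omega

lemma countP_partition (s : Multiset ℝ) (t : ℝ) :
    s.countP (· ≤ t) + s.countP (t < ·) = Multiset.card s := by
  rw [Multiset.card_eq_countP_add_countP (· ≤ t)]
  congr 1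
  exact Multiset.countP_congr rfl (fun a _ => by simp [not_le])

lemma countP_partition' (s : Multiset ℝ) (t : ℝ) :
    s.countP (· < t) + s.countP (t ≤ ·) = Multiset.card s := by
  rw [Multiset.card_eq_countP_add_countP (· < t)]
  congr 1
  exact Multiset.countP_congr rfl (fun a _ => by simp [not_lt])

lemma countP_imp_le {s : Multiset ℝ} {P Q : ℝ → Prop} [DecidablePred P] [DecidablePred Q] (h : ∀ a ∈ s, P a → Q a) :
    s.countP P ≤ s.countP Q := by
  induction s using Multiset.induction with
  | empty => simp
  | cons a s ih =>
    rw [Multiset.countP_cons, Multiset.countP_cons]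
    have h2 := ih (fun b hb => h b (Multiset.mem_cons_of_mem hb))
    by_cases hP : P a
    · rw [if_pos hP, if_pos (h a (Multiset.mem_cons_self a s) hP)]; omega
    · rw [if_neg hP]; split <;> omega

lemma countP_iff_sorted {l : List ℝ} (hl : l.Pairwise (· ≤ ·)) {P : ℝ → Prop} [DecidablePred P]
    (hP : ∀ a b : ℝ, a ≤ b → P b → P a) :
    ∀ {i : ℕ}, (hi : i < l.length) →
      (P l[i] ↔ i + 1 ≤ l.countP fun a => decide (P a)) := by
  induction l with
  | nil => intro i hi; simp at hi
  | cons a l ih =>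
    intro i hi
    rcases List.pairwise_cons.mp hl with ⟨ha, hl'⟩
    rw [List.countP_cons]
    cases i with
    | zero =>
      simp only [List.getElem_cons_zero]
      constructor
      · intro h; rw [if_pos (by simpa using h)]; omega
      · intro h
        by_cases hPa : P a
        · exact hPa
        · rw [if_neg (by simpa using hPa), add_zero] at h
          obtain ⟨b, hb, hPb⟩ := List.countP_pos_iff.mp (Nat.lt_of_lt_of_le Nat.zero_lt_one h)
          exact hP a b (ha b hb) (of_decide_eq_true hPb)
    | succ i =>
      simp only [List.getElem_cons_succ]
      have hi' : i < l.length := by simpa using hi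
      rw [ih hl' hi']
      constructor
      · intro h
        rw [if_pos
          (by simpa using hP a l[i] (ha _ (l.getElem_mem hi')) (((ih hl' hi')).mpr h))]
        omega
      · intro h; split at h <;> omega






lemma length_ascRoots (p : Polynomial ℝ) : (ascRoots p).length = Multiset.card p.roots :=
  Multiset.length_sort _

lemma sorted_ascRoots (p : Polynomial ℝ) : (ascRoots p).Pairwise (· ≤ ·) :=
  Multiset.pairwise_sort _ _

lemma countP_roots_eq (p : Polynomial ℝ) (P : ℝ → Prop) [DecidablePred P] :
    p.roots.countP P = (ascRoots p).countP fun a => decide (P a) := by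
  conv_lhs => rw [← Multiset.sort_eq p.roots (· ≤ ·)]
  exact Multiset.coe_countP _ _

lemma getElem_ascRoots {p : Polynomial ℝ} {i : ℕ} (hi : i < (ascRoots p).length) :
    (ascRoots p)[i]! = (ascRoots p)[i] := getElem!_pos (ascRoots p) i hi

lemma le_iff_nLE {p : Polynomial ℝ} {i : ℕ} (hi : i < (ascRoots p).length) (x : ℝ) :
    (ascRoots p)[i]! ≤ x ↔ i + 1 ≤ nLE p x := by
  rw [getElem_ascRoots hi, nLE, countP_roots_eq]
  exact countP_iff_sorted (sorted_ascRoots p) (fun a b hab hb => le_trans hab hb) hi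

lemma lt_iff_nLT {p : Polynomial ℝ} {i : ℕ} (hi : i < (ascRoots p).length) (x : ℝ) :
    (ascRoots p)[i]! < x ↔ i + 1 ≤ nLT p x := by
  rw [getElem_ascRoots hi, nLT, countP_roots_eq]
  exact countP_iff_sorted (sorted_ascRoots p) (fun a b hab hb => lt_of_le_of_lt hab hb) hi

lemma ge_iff_nLT {p : Polynomial ℝ} {i : ℕ} (hi : i < (ascRoots p).length) (x : ℝ) :
    x ≤ (ascRoots p)[i]! ↔ nLT p x ≤ i := by
  rw [← not_lt, lt_iff_nLT hi]; omega

lemma nLT_self_le {p : Polynomial ℝ} {i : ℕ} (hi : i < (ascRoots p).length) :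
    nLT p ((ascRoots p)[i]!) ≤ i := (ge_iff_nLT hi _).mp le_rfl

lemma nLE_self_ge {p : Polynomial ℝ} {i : ℕ} (hi : i < (ascRoots p).length) :
    i + 1 ≤ nLE p ((ascRoots p)[i]!) := (le_iff_nLE hi _).mp le_rfl





lemma pos_of_no_roots {s : Polynomial ℝ} (hs : s ≠ 0) (hlc : 0 < s.leadingCoeff)
    (hr : s.roots = 0) (x : ℝ) : 0 < s.eval x := by
  have hne : ∀ y : ℝ, s.eval y ≠ 0 := by
    intro y hy
    have : y ∈ s.roots := mem_roots'.mpr ⟨hs, hy⟩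
    simp [hr] at this
  have hex : ∃ y : ℝ, 0 < s.eval y := by
    by_cases hd : s.natDegree = 0
    · obtain ⟨c, rfl⟩ : ∃ c, s = C c := ⟨s.coeff 0, (Polynomial.eq_C_of_natDegree_eq_zero hd)⟩
      exact ⟨0, by simpa [Polynomial.leadingCoeff] using hlc⟩
    · have hdeg : 0 < s.degree := natDegree_pos_iff_degree_pos.mp (Nat.pos_of_ne_zero hd)
      have := s.tendsto_atTop_of_leadingCoeff_nonneg hdeg hlc.le
      obtain ⟨y, hy⟩ := (this.eventually_ge_atTop 1).exists
      exact ⟨y, by linarith⟩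
  obtain ⟨y, hy⟩ := hex
  rcases lt_or_ge 0 (s.eval x) with h | h
  · exact h
  have hx : s.eval x < 0 := lt_of_le_of_ne h (hne x)
  exfalso
  have hcont : ContinuousOn (fun z => s.eval z) (Set.uIcc x y) :=
    (Polynomial.continuous s).continuousOn
  have h0 : (0 : ℝ) ∈ Set.uIcc (s.eval x) (s.eval y) := Set.mem_uIcc.mpr (Or.inl ⟨hx.le, hy.le⟩)
  obtain ⟨z, _, hz⟩ := intermediate_value_uIcc hcont h0
  exact hne z hz

lemma sign_prod (t : ℝ) (s : Multiset ℝ) (h : ∀ r ∈ s, r ≠ t) :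
    0 < (-1 : ℝ) ^ (s.countP (t < ·)) * ((s.map (fun r => t - r)).prod) := by
  induction s using Multiset.induction with
  | empty => simp
  | cons a s ih =>
    have ha : a ≠ t := h a (Multiset.mem_cons_self a s)
    have ih' := ih (fun r hr => h r (Multiset.mem_cons_of_mem hr))
    rw [Multiset.map_cons, Multiset.prod_cons, Multiset.countP_cons]
    rcases ha.lt_or_gt with hlt | hgt
    · rw [if_neg (not_lt.mpr hlt.le), add_zero]
      have h1 : 0 < t - a := by linarith
      nlinarith
    · rw [if_pos hgt, pow_add, pow_one]
      have h1 : 0 < a - t := by linarith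
      nlinarith

lemma countP_replicate_gt (t : ℝ) (n : ℕ) :
    (Multiset.replicate n t).countP (t < ·) = 0 := by
  induction n with
  | zero => simp
  | succ n ih => rw [Multiset.replicate_succ, Multiset.countP_cons, ih, if_neg (lt_irrefl t)]

/-- decomposition `q = W * s` with `s` having no real roots -/
lemma exists_no_root_factor (q : Polynomial ℝ) (hq : q ≠ 0) :
    ∃ s : Polynomial ℝ, q = (q.roots.map fun a => X - C a).prod * s ∧ s ≠ 0 ∧ s.roots = 0 ∧
      s.leadingCoeff = q.leadingCoeff := by
  obtain ⟨s, hs⟩ := q.prod_multiset_X_sub_C_dvd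
  have hW : (q.roots.map fun a => X - C a).prod.Monic :=
    monic_multiset_prod_of_monic _ _ (fun a _ => monic_X_sub_C a)
  have hs0 : s ≠ 0 := by rintro rfl; rw [mul_zero] at hs; exact hq hs
  have hroots : s.roots = 0 := by
    have h1 : q.roots = q.roots + s.roots := by
      conv_lhs => rw [hs]
      rw [roots_mul (hs ▸ hq), roots_multiset_prod_X_sub_C]
    exact (add_eq_left.mp h1.symm)
  refine ⟨s, hs, hs0, hroots, ?_⟩
  rw [hs, leadingCoeff_mul, hW.leadingCoeff, one_mul]

lemma eval_W (t : ℝ) (m : Multiset ℝ) :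
    ((m.map fun a => X - C a).prod).eval t = (m.map fun r => t - r).prod := by
  rw [← Polynomial.coe_evalRingHom, map_multiset_prod, Multiset.map_map]
  congr 1
  exact Multiset.map_congr rfl (fun r _ => by simp)

/-- F1 : sign of the reduced polynomial at `t` is `(-1)^(number of roots > t)`. -/
lemma sign_reduced {p : Polynomial ℝ} (hp : p ≠ 0) (hlc : 0 < p.leadingCoeff) (t : ℝ) :
    0 < (-1 : ℝ) ^ (nGT p t) * (p /ₘ (X - C t) ^ (rootMultiplicity t p)).eval t := by
  set μ := rootMultiplicity t p with hμ
  set q := p /ₘ (X - C t) ^ μ with hqdef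
  have hfact : (X - C t) ^ μ * q = p := pow_mul_divByMonic_rootMultiplicity_eq p t
  have hq0 : q ≠ 0 := by rintro h; rw [h, mul_zero] at hfact; exact hp hfact.symm
  have hqt : q.eval t ≠ 0 := eval_divByMonic_pow_rootMultiplicity_ne_zero t hp
  have hroots : p.roots = Multiset.replicate μ t + q.roots := by
    conv_lhs => rw [← hfact]
    rw [roots_mul (hfact.symm ▸ hp), roots_pow, roots_X_sub_C, Multiset.nsmul_singleton]
  have hcount : nGT p t = q.roots.countP (t < ·) := by
    rw [nGT, hroots, Multiset.countP_add, countP_replicate_gt, zero_add]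
  obtain ⟨s, hqws, hs0, hsroots, hslc⟩ := exists_no_root_factor q hq0
  have hlcq : q.leadingCoeff = p.leadingCoeff := by
    have := congrArg leadingCoeff hfact
    rwa [leadingCoeff_mul, ((monic_X_sub_C t).pow μ).leadingCoeff, one_mul] at this
  have hspos : 0 < s.eval t := pos_of_no_roots hs0 (by rw [hslc, hlcq]; exact hlc) hsroots t
  have hnet : ∀ r ∈ q.roots, r ≠ t := by
    intro r hr he
    exact hqt (he ▸ (mem_roots'.mp hr).2)
  have hsign := sign_prod t q.roots hnet
  have heval : q.eval t = (q.roots.map fun r => t - r).prod * s.eval t := by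
    conv_lhs => rw [hqws]
    rw [eval_mul, eval_W]
  rw [hcount, heval]
  calc (0:ℝ) < ((-1 : ℝ) ^ (Multiset.countP (fun x => t < x) q.roots) *
      (Multiset.map (fun r => t - r) q.roots).prod) * s.eval t := mul_pos hsign hspos
  _ = _ := by ring

lemma even_natDegree_of_no_roots {s : Polynomial ℝ} (hs : s ≠ 0) (h : s.roots = 0) :
    s.natDegree % 2 = 0 := by
  by_contra hodd
  have hodd' : s.natDegree % 2 = 1 := Nat.mod_two_eq_zero_or_one s.natDegree |>.resolve_left hodd
  -- wlog positive leading coefficient via sign case analysis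
  have key : ∀ w : Polynomial ℝ, w ≠ 0 → 0 < w.leadingCoeff → w.roots = 0 →
      w.natDegree % 2 = 1 → False := by
    intro w hw hwlc hwroots hwodd
    have hdpos : 0 < w.natDegree := by omega
    set u := w.comp (-X) with hu
    have hnX : ((-X : Polynomial ℝ)).natDegree = 1 := by simp
    have hndu : u.natDegree = w.natDegree := by rw [hu, natDegree_comp, hnX, mul_one]
    have hlcu : u.leadingCoeff = -w.leadingCoeff := by
      rw [hu, leadingCoeff_comp (by rw [hnX]; omega)]
      have : ((-X : Polynomial ℝ)).leadingCoeff = -1 := by simp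
      rw [this, (Nat.odd_iff.mpr hwodd).neg_one_pow, mul_neg_one]
    have hvdeg : 0 < (-u).degree := by
      rw [degree_neg]
      refine natDegree_pos_iff_degree_pos.mp ?_
      omega
    have hvlc : 0 ≤ (-u).leadingCoeff := by rw [leadingCoeff_neg, hlcu]; linarith
    have htend := (-u).tendsto_atTop_of_leadingCoeff_nonneg hvdeg hvlc
    obtain ⟨y, hy⟩ := (htend.eventually_ge_atTop 1).exists
    have hyu : (-u).eval y = - w.eval (-y) := by rw [eval_neg, hu, eval_comp]; simp
    have : w.eval (-y) < 0 := by rw [hyu] at hy; linarith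
    have := pos_of_no_roots hw hwlc hwroots (-y)
    linarith
  rcases (leadingCoeff_ne_zero.mpr hs).lt_or_gt with hneg | hpos
  · exact key (-s) (neg_ne_zero.mpr hs) (by rw [leadingCoeff_neg]; linarith)
      (by rw [← h]; exact s.roots_neg) (by rwa [natDegree_neg])
  · exact key s hs hpos h hodd'

lemma card_roots_mod_two {p : Polynomial ℝ} (hp : p ≠ 0) :
    (Multiset.card p.roots) % 2 = p.natDegree % 2 := by
  obtain ⟨s, hfact, hs0, hsroots, _⟩ := exists_no_root_factor p hp
  have hW : (p.roots.map fun a => X - C a).prod.Monic :=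
    monic_multiset_prod_of_monic _ _ (fun a _ => monic_X_sub_C a)
  have hnd : p.natDegree = Multiset.card p.roots + s.natDegree := by
    conv_lhs => rw [hfact]
    rw [natDegree_mul hW.ne_zero hs0, natDegree_multiset_prod_X_sub_C_eq_card]
  have := even_natDegree_of_no_roots hs0 hsroots
  omega







lemma exists_sample (S : Multiset ℝ) (t : ℝ) :
    ∃ x, x < t ∧ ∀ r ∈ S, r < t → r ≤ x := by
  set T := S.toFinset.filter (· < t) with hT
  by_cases hne : T.Nonempty
  · refine ⟨T.max' hne, ?_, ?_⟩
    · exact (Finset.mem_filter.mp (T.max'_mem hne)).2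
    · intro r hr hrt
      exact T.le_max' r (Finset.mem_filter.mpr ⟨Multiset.mem_toFinset.mpr hr, hrt⟩)
  · refine ⟨t - 1, by linarith, fun r hr hrt => absurd ⟨r, ?_⟩ hne⟩
    exact Finset.mem_filter.mpr ⟨Multiset.mem_toFinset.mpr hr, hrt⟩

lemma sample_nLE {φ : Polynomial ℝ} {x t : ℝ} (hx : x < t)
    (hall : ∀ r ∈ φ.roots, r < t → r ≤ x) : nLE φ x = nLT φ t :=
  Multiset.countP_congr rfl (fun r hr =>
    propext ⟨fun h1 => lt_of_le_of_lt h1 hx, fun h1 => hall r hr h1⟩)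

lemma sample_nGT {φ : Polynomial ℝ} {x t : ℝ} (hx : x < t)
    (hall : ∀ r ∈ φ.roots, r < t → r ≤ x) : nGT φ x = nGE φ t :=
  Multiset.countP_congr rfl (fun r hr =>
    propext ⟨fun h1 => not_lt.mp (fun hrt => absurd (hall r hr hrt) (not_le.mpr h1)),
     fun h1 => lt_of_lt_of_le hx h1⟩)

lemma parity_helper {a b : ℕ} {E : ℝ} (h1 : 0 < (-1 : ℝ) ^ a * E) (h2 : 0 < (-1 : ℝ) ^ b * E) :
    a % 2 = b % 2 := by
  rcases Nat.even_or_odd a with ha | ha <;> rcases Nat.even_or_odd b with hb | hb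
  · rw [Nat.even_iff.mp ha, Nat.even_iff.mp hb]
  · rw [ha.neg_one_pow] at h1; rw [hb.neg_one_pow] at h2; nlinarith
  · rw [ha.neg_one_pow] at h1; rw [hb.neg_one_pow] at h2; nlinarith
  · rw [Nat.odd_iff.mp ha, Nat.odd_iff.mp hb]

/-- Key local fact (P1): at a root `t` of `g` of multiplicity `m`, the sum `p = f + h`
either has multiplicity at least `m` at `t`, or exactly `m - 1` with a forced parity. -/
lemma key_P1 {f h g : Polynomial ℝ} (hf0 : f ≠ 0) (hh0 : h ≠ 0)
    (hp0 : f + h ≠ 0) (hplc : 0 < (f + h).leadingCoeff)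
    (hflc : 0 < f.leadingCoeff) (hhlc : 0 < h.leadingCoeff)
    (Hf : ∀ x, nGT g x ≤ nGT f x + 1 ∧ nGT f x ≤ nGT g x)
    (Hh : ∀ x, nGT g x ≤ nGT h x + 1 ∧ nGT h x ≤ nGT g x) (t : ℝ) :
    g.roots.count t ≤ (f + h).roots.count t ∨
      ((f + h).roots.count t + 1 = g.roots.count t ∧
        nGT (f + h) t % 2 = nGT g t % 2) := by
  set p := f + h with hpdef
  set m := g.roots.count t with hm
  obtain ⟨x, hx, hall⟩ := exists_sample (f.roots + g.roots + h.roots + p.roots) t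
  have hallf : ∀ r ∈ f.roots, r < t → r ≤ x := fun r hr => hall r (by simp [hr])
  have hallg : ∀ r ∈ g.roots, r < t → r ≤ x := fun r hr => hall r (by simp [hr])
  have hallh : ∀ r ∈ h.roots, r < t → r ≤ x := fun r hr => hall r (by simp [hr])
  have hallp : ∀ r ∈ p.roots, r < t → r ≤ x := fun r hr => hall r (by simp [hr])
  set μf := f.roots.count t with hμf
  set μh := h.roots.count t with hμh
  -- multiplicity lower bounds and exactness parity facts
  have hgsplit : nGE g t = nGT g t + m := countP_split' g.roots t
  have hfsplit : nGE f t = nGT f t + μf := countP_split' f.roots t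
  have hhsplit : nGE h t = nGT h t + μh := countP_split' h.roots t
  have hfx := (Hf x).1
  have hhx := (Hh x).1
  rw [sample_nGT hx hallf, sample_nGT hx hallg] at hfx
  rw [sample_nGT hx hallh, sample_nGT hx hallg] at hhx
  have hft := (Hf t).2
  have hht := (Hh t).2
  have hmf : m ≤ μf + 1 := by omega
  have hmh : m ≤ μh + 1 := by omega
  have hfexact : μf + 1 = m → nGT f t = nGT g t := by intro he; omega
  have hhexact : μh + 1 = m → nGT h t = nGT g t := by intro he; omega
  -- the multiplicity-m case
  by_cases hca : m ≤ μf ∧ m ≤ μh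
  · left
    have hca1 : m ≤ rootMultiplicity t f := by rw [← count_roots]; exact hca.1
    have hca2 : m ≤ rootMultiplicity t h := by rw [← count_roots]; exact hca.2
    have hdf : (X - C t) ^ m ∣ f :=
      dvd_trans (pow_dvd_pow _ hca1) (pow_rootMultiplicity_dvd f t)
    have hdh : (X - C t) ^ m ∣ h :=
      dvd_trans (pow_dvd_pow _ hca2) (pow_rootMultiplicity_dvd h t)
    rw [count_roots]
    exact (le_rootMultiplicity_iff hp0).mpr (dvd_add hdf hdh)
  -- the exact case: one of the multiplicities is m - 1
  · right
    have hcase : (μf + 1 = m ∧ μf ≤ μh) ∨ (μh + 1 = m ∧ μh ≤ μf) := by omega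
    -- symmetric argument
    have main : ∀ f' h' : Polynomial ℝ, f' ≠ 0 → h' ≠ 0 → 0 < f'.leadingCoeff →
        0 < h'.leadingCoeff → f' + h' = p →
        (∀ x, nGT g x ≤ nGT f' x + 1 ∧ nGT f' x ≤ nGT g x) →
        f'.roots.count t + 1 = m → f'.roots.count t ≤ h'.roots.count t →
        (h'.roots.count t + 1 = m → nGT h' t = nGT g t) →
        nGT f' t = nGT g t →
        p.roots.count t + 1 = m ∧ nGT p t % 2 = nGT g t % 2 := by
      intro f' h' hf'0 hh'0 hf'lc hh'lc hsum Hf' hexact hle hh'par hf'par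
      set ν := f'.roots.count t with hν
      have hνf : ν = rootMultiplicity t f' := by rw [hν, count_roots]
      have hνh : (X - C t) ^ ν ∣ h' := by
        refine dvd_trans (pow_dvd_pow _ ?_) (pow_rootMultiplicity_dvd h' t)
        rw [← count_roots]; exact hle
      set M := (X - C t) ^ ν with hM
      have hMmonic : M.Monic := (monic_X_sub_C t).pow ν
      set F := f' /ₘ M with hF
      set H := h' /ₘ M with hH
      have hfF : f' = M * F := by
        rw [hF, hM, hνf]
        exact (pow_mul_divByMonic_rootMultiplicity_eq f' t).symm
      have hhH : h' = M * H := by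
        obtain ⟨c, hc⟩ := hνh
        rw [hH, hc, mul_divByMonic_cancel_left c hMmonic]
      have hpMQ : p = M * (F + H) := by rw [← hsum, hfF, hhH, mul_add]
      -- sign of F at t
      have hsF : 0 < (-1 : ℝ) ^ (nGT g t) * F.eval t := by
        have := sign_reduced hf'0 hf'lc t
        rw [← hνf, ← hM, ← hF, hf'par] at this
        exact this
      -- sign of H at t : positive or zero
      have hsH : 0 ≤ (-1 : ℝ) ^ (nGT g t) * H.eval t := by
        rcases eq_or_lt_of_le hle with heq | hlt
        · have := sign_reduced hh'0 hh'lc t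
          have hνh' : ν = rootMultiplicity t h' := by rw [count_roots] at heq; exact heq
          rw [← hνh', ← hM, ← hH] at this
          rw [hh'par (by omega)] at this
          exact this.le
        · -- strictly larger multiplicity: H.eval t = 0
          have hδ : (X - C t) ^ (ν + 1) ∣ h' := by
            refine dvd_trans (pow_dvd_pow _ ?_) (pow_rootMultiplicity_dvd h' t)
            rw [← count_roots]; exact hlt
          obtain ⟨c, hc⟩ := hδ
          have hHc : H = (X - C t) * c := by
            have : h' = M * ((X - C t) * c) := by rw [hc, hM, pow_succ]; ring
            rw [hH, this, mul_divByMonic_cancel_left _ hMmonic]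
          rw [hHc]
          simp
      have hE : 0 < (-1 : ℝ) ^ (nGT g t) * (F + H).eval t := by
        rw [eval_add, mul_add]; linarith
      have hEne : (F + H).eval t ≠ 0 := by
        intro he; rw [he, mul_zero] at hE; exact lt_irrefl 0 hE
      have hmult : rootMultiplicity t p = ν := by
        rw [hpMQ, rootMultiplicity_mul (by rw [← hpMQ]; exact hp0), hM,
          rootMultiplicity_X_sub_C_pow, rootMultiplicity_eq_zero hEne, add_zero]
      have hpred : p /ₘ (X - C t) ^ (rootMultiplicity t p) = F + H := by
        rw [hmult, ← hM]
        conv_lhs => rw [hpMQ]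
        exact mul_divByMonic_cancel_left _ hMmonic
      have hsP := sign_reduced hp0 hplc t
      rw [hpred] at hsP
      constructor
      · rw [count_roots, hmult]; exact hexact
      · exact parity_helper hsP hE
    rcases hcase with ⟨h1, h2⟩ | ⟨h1, h2⟩
    · exact main f h hf0 hh0 hflc hhlc rfl Hf h1 h2 hhexact (hfexact h1)
    · have := main h f hh0 hf0 hhlc hflc (add_comm h f) Hh h1 h2 hfexact (hhexact h1)
      rwa [hpdef]

/-- MIRROR induction: counting roots from above. -/
lemma mirror {f h g : Polynomial ℝ} (hf0 : f ≠ 0) (hh0 : h ≠ 0)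
    (hp0 : f + h ≠ 0) (hplc : 0 < (f + h).leadingCoeff)
    (hflc : 0 < f.leadingCoeff) (hhlc : 0 < h.leadingCoeff)
    (Hf : ∀ x, nGT g x ≤ nGT f x + 1 ∧ nGT f x ≤ nGT g x)
    (Hh : ∀ x, nGT g x ≤ nGT h x + 1 ∧ nGT h x ≤ nGT g x) :
    ∀ x, nGT g x ≤ nGT (f + h) x + 1 := by
  set p := f + h with hpdef
  suffices H : ∀ k x, nGT g x = k → nGT g x ≤ nGT p x + 1 by
    intro x; exact H _ x rfl
  intro k
  induction k using Nat.strong_induction_on with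
  | _ k IH =>
    intro x hk
    rcases Nat.eq_zero_or_pos k with rfl | hkpos
    · omega
    · have hex : ∃ r ∈ g.roots, x < r := Multiset.countP_pos.mp (by rw [← nGT]; omega)
      set T := g.roots.toFinset.filter (x < ·) with hT
      have hne : T.Nonempty := by
        obtain ⟨r, hr, hrx⟩ := hex
        exact ⟨r, Finset.mem_filter.mpr ⟨Multiset.mem_toFinset.mpr hr, hrx⟩⟩
      set t := T.min' hne with ht
      have htmem : t ∈ g.roots ∧ x < t := by
        have := Finset.mem_filter.mp (T.min'_mem hne)
        exact ⟨Multiset.mem_toFinset.mp this.1, this.2⟩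
      have hmin : ∀ r ∈ g.roots, x < r → t ≤ r := fun r hr hxr =>
        T.min'_le r (Finset.mem_filter.mpr ⟨Multiset.mem_toFinset.mpr hr, hxr⟩)
      set m := g.roots.count t with hm
      have hm1 : 1 ≤ m := Multiset.count_pos.mpr htmem.1
      have ha : nGE g t = nGT g x :=
        Multiset.countP_congr rfl (fun r hr =>
          propext ⟨fun h1 => lt_of_lt_of_le htmem.2 h1, fun h1 => hmin r hr h1⟩)
      have hb : nGE p t ≤ nGT p x :=
        countP_imp_le (fun r _ h1 => lt_of_lt_of_le htmem.2 h1)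
      have hc : nGE g t = nGT g t + m := countP_split' g.roots t
      have hd : nGE p t = nGT p t + p.roots.count t := countP_split' p.roots t
      have hIH : nGT g t ≤ nGT p t + 1 := IH (nGT g t) (by omega) t rfl
      rcases key_P1 hf0 hh0 hp0 hplc hflc hhlc Hf Hh t with hcase | ⟨hcase1, hcase2⟩
      · rw [← hpdef] at hcase; omega
      · rw [← hpdef] at hcase1 hcase2; omega

/-- CORE induction: counting roots from below. -/
lemma core {f h g : Polynomial ℝ} (hf0 : f ≠ 0) (hh0 : h ≠ 0)
    (hp0 : f + h ≠ 0) (hplc : 0 < (f + h).leadingCoeff)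
    (hflc : 0 < f.leadingCoeff) (hhlc : 0 < h.leadingCoeff)
    (Hf : ∀ x, nGT g x ≤ nGT f x + 1 ∧ nGT f x ≤ nGT g x)
    (Hh : ∀ x, nGT g x ≤ nGT h x + 1 ∧ nGT h x ≤ nGT g x)
    (hgrr : RealRooted g) (δ : ℕ) (hδ : (f + h).natDegree + δ = g.natDegree) :
    ∀ x, nLE g x ≤ nLE (f + h) x + δ := by
  set p := f + h with hpdef
  have hparity : (Multiset.card p.roots) % 2 = p.natDegree % 2 := card_roots_mod_two hp0
  have hcardle : Multiset.card p.roots ≤ p.natDegree := p.card_roots'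
  have hcardg : Multiset.card g.roots = g.natDegree := hgrr
  suffices H : ∀ k x, nLE g x = k → nLE g x ≤ nLE p x + δ by
    intro x; exact H _ x rfl
  intro k
  induction k using Nat.strong_induction_on with
  | _ k IH =>
    intro x hk
    rcases Nat.eq_zero_or_pos k with rfl | hkpos
    · omega
    · have hex : ∃ r ∈ g.roots, r ≤ x := Multiset.countP_pos.mp (by rw [← nLE]; omega)
      set T := g.roots.toFinset.filter (· ≤ x) with hT
      have hne : T.Nonempty := by
        obtain ⟨r, hr, hrx⟩ := hex
        exact ⟨r, Finset.mem_filter.mpr ⟨Multiset.mem_toFinset.mpr hr, hrx⟩⟩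
      set t := T.max' hne with ht
      have htmem : t ∈ g.roots ∧ t ≤ x := by
        have := Finset.mem_filter.mp (T.max'_mem hne)
        exact ⟨Multiset.mem_toFinset.mp this.1, this.2⟩
      have hmax : ∀ r ∈ g.roots, r ≤ x → r ≤ t := fun r hr hxr =>
        T.le_max' r (Finset.mem_filter.mpr ⟨Multiset.mem_toFinset.mpr hr, hxr⟩)
      set m := g.roots.count t with hm
      have hm1 : 1 ≤ m := Multiset.count_pos.mpr htmem.1
      have ha : nLE g t = nLE g x :=
        Multiset.countP_congr rfl (fun r hr =>
          propext ⟨fun h1 => le_trans h1 htmem.2, fun h1 => hmax r hr h1⟩)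
      have hb : nLE p t ≤ nLE p x :=
        countP_imp_le (fun r _ h1 => le_trans h1 htmem.2)
      obtain ⟨x', hx', hall⟩ := exists_sample (g.roots + p.roots) t
      have hallg : ∀ r ∈ g.roots, r < t → r ≤ x' := fun r hr => hall r (by simp [hr])
      have hallp : ∀ r ∈ p.roots, r < t → r ≤ x' := fun r hr => hall r (by simp [hr])
      have hcg : nLE g x' = nLT g t := sample_nLE hx' hallg
      have hcp : nLE p x' = nLT p t := sample_nLE hx' hallp
      have hcp2 : nGT p x' = nGE p t := sample_nGT hx' hallp
      have he : nLE g t = nLT g t + m := countP_split g.roots t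
      have hf : nLE p t = nLT p t + p.roots.count t := countP_split p.roots t
      have hgpart : nLE g t + nGT g t = Multiset.card g.roots := countP_partition g.roots t
      have hppart : nLE p x' + nGT p x' = Multiset.card p.roots := countP_partition p.roots x'
      have hsplit' : nGE p t = nGT p t + p.roots.count t := countP_split' p.roots t
      have hIH : nLE g x' ≤ nLE p x' + δ := IH (nLE g x') (by omega) x' rfl
      rcases key_P1 hf0 hh0 hp0 hplc hflc hhlc Hf Hh t with hcase | ⟨hcase1, hcase2⟩
      · rw [← hpdef] at hcase; omega
      · rw [← hpdef] at hcase1 hcase2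
        omega

lemma partition_rr {φ : Polynomial ℝ} (hrr : RealRooted φ) (x : ℝ) :
    nLE φ x + nGT φ x = φ.natDegree := by
  rw [← hrr]; exact countP_partition φ.roots x

lemma partition_rr' {φ : Polynomial ℝ} (hrr : RealRooted φ) (x : ℝ) :
    nLT φ x + nGE φ x = φ.natDegree := by
  rw [← hrr]; exact countP_partition' φ.roots x

lemma nLE_le_card (φ : Polynomial ℝ) (x : ℝ) : nLE φ x ≤ Multiset.card φ.roots :=
  Multiset.countP_le_card _ _

end IlAux

/-- Translate the interlacing hypothesis into counting bounds. -/
lemma IlAux.translate {φ g : Polynomial ℝ} (hI : Interlaces φ g) (x : ℝ) :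
    IlAux.nGT g x ≤ IlAux.nGT φ x + 1 ∧ IlAux.nGT φ x ≤ IlAux.nGT g x := by
  open IlAux in
  obtain ⟨hrg, hrφ, hcase⟩ := hI
  have hlg : (ascRoots g).length = g.natDegree := by rw [length_ascRoots, hrg]
  have hlφ : (ascRoots φ).length = φ.natDegree := by rw [length_ascRoots, hrφ]
  have hpg : nLE g x + nGT g x = g.natDegree := partition_rr hrg x
  have hpφ : nLE φ x + nGT φ x = φ.natDegree := partition_rr hrφ x
  have hcg : nLE g x ≤ g.natDegree := by omega
  have hcφ : nLE φ x ≤ φ.natDegree := by omega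
  rcases hcase with ⟨hdeq, hc1, hc2⟩ | ⟨hdeq, hc⟩
  · have key1 : nLE g x ≤ nLE φ x := by
      rcases Nat.eq_zero_or_pos (nLE g x) with h0 | h1
      · omega
      · set k := nLE g x with hk
        have hig : k - 1 < (ascRoots g).length := by omega
        have hiφ : k - 1 < (ascRoots φ).length := by omega
        have h2 : (ascRoots g)[k-1]! ≤ x := (le_iff_nLE hig x).mpr (by omega)
        have h3 := hc1 (k - 1) (by omega)
        have := (le_iff_nLE hiφ x).mp (le_trans h3 h2)
        omega
    have key2 : nLE φ x ≤ nLE g x + 1 := by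
      rcases Nat.lt_or_ge (nLE φ x) 2 with h0 | h1
      · omega
      · set k := nLE φ x with hk
        have hiφ : k - 1 < (ascRoots φ).length := by omega
        have hig : k - 2 < (ascRoots g).length := by omega
        have h2 : (ascRoots φ)[k-1]! ≤ x := (le_iff_nLE hiφ x).mpr (by omega)
        have h3 := hc2 (k - 2) (by omega)
        have h4 : (k - 2) + 1 = k - 1 := by omega
        rw [h4] at h3
        have := (le_iff_nLE hig x).mp (le_trans h3 h2)
        omega
    omega
  · have key1 : nLE φ x ≤ nLE g x := by
      rcases Nat.eq_zero_or_pos (nLE φ x) with h0 | h1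
      · omega
      · set k := nLE φ x with hk
        have hiφ : k - 1 < (ascRoots φ).length := by omega
        have hig : k - 1 < (ascRoots g).length := by omega
        have h2 : (ascRoots φ)[k-1]! ≤ x := (le_iff_nLE hiφ x).mpr (by omega)
        have h3 := (hc (k - 1) (by omega)).1
        have := (le_iff_nLE hig x).mp (le_trans h3 h2)
        omega
    have key2 : nLE g x ≤ nLE φ x + 1 := by
      rcases Nat.lt_or_ge (nLE g x) 2 with h0 | h1
      · omega
      · set k := nLE g x with hk
        have hig : k - 1 < (ascRoots g).length := by omega
        have hiφ : k - 2 < (ascRoots φ).length := by omega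
        have h2 : (ascRoots g)[k-1]! ≤ x := (le_iff_nLE hig x).mpr (by omega)
        have h3 := (hc (k - 2) (by omega)).2
        have h4 : (k - 2) + 1 = k - 1 := by omega
        rw [h4] at h3
        have := (le_iff_nLE hiφ x).mp (le_trans h3 h2)
        omega
    omega

namespace IlAux

lemma nGE_bound {g p : Polynomial ℝ} (Hm : ∀ x, nGT g x ≤ nGT p x + 1) (t : ℝ) :
    nGE g t ≤ nGE p t + 1 := by
  obtain ⟨x', hx', hall⟩ := exists_sample (g.roots + p.roots) t
  have hallg : ∀ r ∈ g.roots, r < t → r ≤ x' := fun r hr => hall r (by simp [hr])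
  have hallp : ∀ r ∈ p.roots, r < t → r ≤ x' := fun r hr => hall r (by simp [hr])
  rw [← sample_nGT hx' hallg, ← sample_nGT hx' hallp]
  exact Hm x'

lemma natDegree_add_pos_aux {f h : Polynomial ℝ} (hle : f.natDegree ≤ h.natDegree)
    (hhlc : 0 < h.leadingCoeff) (hfc : ∀ i, 0 ≤ f.coeff i) :
    (f + h).natDegree = max f.natDegree h.natDegree ∧ 0 < (f + h).leadingCoeff ∧ f + h ≠ 0 := by
  set n := h.natDegree with hn
  have hcoeff : 0 < (f + h).coeff n := by
    rw [coeff_add]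
    have := hfc n
    have : (0:ℝ) < h.coeff n := hhlc
    have := hfc n
    linarith [hfc n]
  have hne : f + h ≠ 0 := fun h0 => by rw [h0] at hcoeff; simp at hcoeff
  have hge : n ≤ (f + h).natDegree := le_natDegree_of_ne_zero (ne_of_gt hcoeff)
  have hle2 : (f + h).natDegree ≤ n := le_trans (natDegree_add_le f h) (by omega)
  have hnd : (f + h).natDegree = n := le_antisymm hle2 hge
  refine ⟨by rw [hnd]; omega, ?_, hne⟩
  rw [leadingCoeff, hnd]; exact hcoeff

lemma natDegree_add_pos {f h : Polynomial ℝ} (hflc : 0 < f.leadingCoeff)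
    (hhlc : 0 < h.leadingCoeff) (hfc : ∀ i, 0 ≤ f.coeff i) (hhc : ∀ i, 0 ≤ h.coeff i) :
    (f + h).natDegree = max f.natDegree h.natDegree ∧ 0 < (f + h).leadingCoeff ∧ f + h ≠ 0 := by
  rcases le_total f.natDegree h.natDegree with hle | hle
  · exact natDegree_add_pos_aux hle hhlc hfc
  · have := natDegree_add_pos_aux hle hflc hhc
    rwa [add_comm, max_comm] at this

end IlAux

open IlAux in
lemma il_main_case {f h g : Polynomial ℝ} (hf0 : f ≠ 0) (hh0 : h ≠ 0)
    (hflc : 0 < f.leadingCoeff) (hhlc : 0 < h.leadingCoeff)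
    (hfc : ∀ i, 0 ≤ f.coeff i) (hhc : ∀ i, 0 ≤ h.coeff i)
    (hd1 : 1 ≤ g.natDegree)
    (hfI : Interlaces f g) (hhI : Interlaces h g) : Interlaces (f + h) g := by
  have Hf := fun x => translate hfI x
  have Hh := fun x => translate hhI x
  obtain ⟨hrg, hrf, hfcase⟩ := hfI
  obtain ⟨-, hrh, hhcase⟩ := hhI
  obtain ⟨hmax, hplc, hp0⟩ := natDegree_add_pos hflc hhlc hfc hhc
  have hfd : f.natDegree = g.natDegree ∨ f.natDegree + 1 = g.natDegree := by
    rcases hfcase with ⟨h1, -⟩ | ⟨h1, -⟩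
    · left; omega
    · right; omega
  have hhd : h.natDegree = g.natDegree ∨ h.natDegree + 1 = g.natDegree := by
    rcases hhcase with ⟨h1, -⟩ | ⟨h1, -⟩
    · left; omega
    · right; omega
  have hdp : (f + h).natDegree + (g.natDegree - (f + h).natDegree) = g.natDegree ∧
      g.natDegree - (f + h).natDegree ≤ 1 := by
    rcases le_total f.natDegree h.natDegree with hle | hle
    · rw [hmax, max_eq_right hle]; omega
    · rw [hmax, max_eq_left hle]; omega
  set δ := g.natDegree - (f + h).natDegree with hδdef
  have Hm : ∀ x, nGT g x ≤ nGT (f + h) x + 1 := mirror hf0 hh0 hp0 hplc hflc hhlc Hf Hh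
  have Hc : ∀ x, nLE g x ≤ nLE (f + h) x + δ :=
    core hf0 hh0 hp0 hplc hflc hhlc Hf Hh hrg δ (by omega)
  -- real-rootedness of the sum
  have hgr0 : g.roots ≠ 0 := by
    intro h0
    have hc : Multiset.card g.roots = g.natDegree := hrg
    rw [h0] at hc
    simp only [Multiset.card_zero] at hc
    omega
  have hne : g.roots.toFinset.Nonempty := Multiset.toFinset_nonempty.mpr hgr0
  obtain ⟨x, hxub⟩ : ∃ x, ∀ r ∈ g.roots, r ≤ x :=
    ⟨g.roots.toFinset.max' hne, fun r hr => Finset.le_max' _ r (Multiset.mem_toFinset.mpr hr)⟩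
  have hxall : nLE g x = g.natDegree := by
    rw [← hrg]; exact Multiset.countP_eq_card.mpr hxub
  have hrrp : RealRooted (f + h) := by
    have h1 := Hc x
    have h2 : nLE (f + h) x ≤ Multiset.card (f + h).roots := nLE_le_card _ _
    have h3 : Multiset.card (f + h).roots ≤ (f + h).natDegree := (f + h).card_roots'
    unfold RealRooted
    omega
  refine ⟨hrg, hrrp, ?_⟩
  have hlg : (ascRoots g).length = g.natDegree := by rw [length_ascRoots, hrg]
  have hlp : (ascRoots (f + h)).length = (f + h).natDegree := by rw [length_ascRoots, hrrp]
  have main1 : ∀ i, i < g.natDegree → i + 1 ≤ nLE (f + h) ((ascRoots g)[i]!) + δ := by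
    intro i hi
    have h1 := nLE_self_ge (p := g) (i := i) (by omega)
    have h2 := Hc ((ascRoots g)[i]!)
    omega
  have main2 : ∀ i, i < g.natDegree →
      nLT (f + h) ((ascRoots g)[i]!) + g.natDegree ≤ (f + h).natDegree + i + 1 := by
    intro i hi
    have h1 := nLT_self_le (p := g) (i := i) (by omega)
    have h2 := partition_rr' hrg ((ascRoots g)[i]!)
    have h3 := nGE_bound Hm ((ascRoots g)[i]!)
    have h4 := partition_rr' hrrp ((ascRoots g)[i]!)
    omega
  rcases Nat.eq_zero_or_pos δ with hδ0 | hδ1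
  · refine Or.inl ⟨by omega, ?_, ?_⟩
    · intro i hi
      exact (le_iff_nLE (by omega : i < (ascRoots (f + h)).length) _).mpr
        (by have := main1 i hi; omega)
    · intro i hi
      exact (ge_iff_nLT (by omega : i + 1 < (ascRoots (f + h)).length) _).mpr
        (by have := main2 i (by omega); omega)
  · have hδ1' : δ = 1 := by omega
    refine Or.inr ⟨by omega, ?_⟩
    intro i hi
    constructor
    · exact (ge_iff_nLT (by omega : i < (ascRoots (f + h)).length) _).mpr
        (by have := main2 i (by omega); omega)
    · exact (le_iff_nLE (by omega : i < (ascRoots (f + h)).length) _).mpr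
        (by have := main1 (i + 1) (by omega); omega)


theorem stmt1 (f g h : Polynomial ℝ)
    (hf : RealRooted f) (hg : RealRooted g) (hh : RealRooted h)
    (hf' : ∀ i, 0 ≤ f.coeff i) (hg' : ∀ i, 0 ≤ g.coeff i) (hh' : ∀ i, 0 ≤ h.coeff i)
    (hfg : Interlaces f g) (hhg : Interlaces h g) :
    Interlaces (f + h) g := by
  by_cases hf0 : f = 0
  · subst hf0; rw [zero_add]; exact hhg
  by_cases hh0 : h = 0
  · subst hh0; rw [add_zero]; exact hfg
  have hflc : 0 < f.leadingCoeff :=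
    lt_of_le_of_ne (hf' f.natDegree) (fun e => (leadingCoeff_ne_zero.mpr hf0) e.symm)
  have hhlc : 0 < h.leadingCoeff :=
    lt_of_le_of_ne (hh' h.natDegree) (fun e => (leadingCoeff_ne_zero.mpr hh0) e.symm)
  by_cases hd0 : g.natDegree = 0
  · have hfd : f.natDegree = 0 := by
      rcases hfg.2.2 with ⟨h1, -⟩ | ⟨h1, -⟩ <;> omega
    have hhd : h.natDegree = 0 := by
      rcases hhg.2.2 with ⟨h1, -⟩ | ⟨h1, -⟩ <;> omega
    have hpd : (f + h).natDegree = 0 := by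
      have := natDegree_add_le f h; omega
    refine ⟨hfg.1, ?_, Or.inl ⟨by omega, fun i hi => absurd hi (by omega),
      fun i hi => absurd hi (by omega)⟩⟩
    have := (f + h).card_roots'
    unfold RealRooted
    omega
  · exact il_main_case hf0 hh0 hflc hhlc hf' hh' (by omega) hfg hhg
end

section
/- If f and g are real-rooted polynomials with nonnegative coefficients such that f interlaces g, then the polynomial (1+z)f + g interlaces the polynomial zf + (1+z)g; that is, the matrix [[1+z, 1],[z, 1+z]] preserves interlacing pairs. -/
open Polynomial

section InterlacingProof

open List

-- Basic facts about ascRoots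
lemma ascRoots_sorted_s2 (p : ℝ[X]) : (ascRoots p).Pairwise (· ≤ ·) := Multiset.pairwise_sort _ _

lemma coe_ascRoots (p : ℝ[X]) : (↑(ascRoots p) : Multiset ℝ) = p.roots := Multiset.sort_eq _ _

lemma length_ascRoots (p : ℝ[X]) : (ascRoots p).length = p.roots.card := by
  rw [← Multiset.coe_card, coe_ascRoots]

lemma ascRoots_eq_of_sorted {p : ℝ[X]} {l : List ℝ} (h : p.roots = ↑l)
    (hl : l.Pairwise (· ≤ ·)) : ascRoots p = l := by
  apply List.Perm.eq_of_pairwise' (ascRoots_sorted_s2 p) hl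
  rw [← Multiset.coe_eq_coe, coe_ascRoots, h]

lemma mem_ascRoots {p : ℝ[X]} {x : ℝ} : x ∈ ascRoots p ↔ x ∈ p.roots := by
  rw [← coe_ascRoots p, Multiset.mem_coe]

-- eventual sign lemmas
lemma eventually_pos_atTop (p : ℝ[X]) (h : 0 < p.leadingCoeff) :
    ∃ B : ℝ, ∀ x, B ≤ x → 0 < p.eval x := by
  rcases Nat.eq_zero_or_pos p.natDegree with hd | hd
  · refine ⟨0, fun x _ => ?_⟩
    have hc : p = C (p.coeff 0) := p.eq_C_of_natDegree_eq_zero hd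
    rw [hc, eval_C]
    rwa [Polynomial.leadingCoeff, hd] at h
  · have hdeg : 0 < p.degree := natDegree_pos_iff_degree_pos.mp hd
    have ht := p.tendsto_atTop_of_leadingCoeff_nonneg hdeg h.le
    rcases (Filter.tendsto_atTop.mp ht 1).exists_forall_of_atTop with ⟨B, hB⟩
    exact ⟨B, fun x hx => lt_of_lt_of_le one_pos (hB x hx)⟩

lemma comp_negX_leadingCoeff (p : ℝ[X]) (hp : p ≠ 0) :
    (p.comp (-X)).leadingCoeff = p.leadingCoeff * (-1) ^ p.natDegree ∧
      (p.comp (-X)).natDegree = p.natDegree := by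
  have h1 : (-X : ℝ[X]).natDegree = 1 := by simp [natDegree_neg]
  constructor
  · rw [Polynomial.leadingCoeff_comp (by rw [h1]; norm_num)]
    simp [leadingCoeff_neg]
  · rw [Polynomial.natDegree_comp, h1, mul_one]

lemma eventually_sign_atBot (p : ℝ[X]) (h : 0 < p.leadingCoeff) :
    ∃ A : ℝ, ∀ x, x ≤ A →
      (if Even p.natDegree then 0 < p.eval x else p.eval x < 0) := by
  have hp : p ≠ 0 := fun hh => by simp [hh] at h
  obtain ⟨hlc, hdeg⟩ := comp_negX_leadingCoeff p hp
  by_cases he : Even p.natDegree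
  · have : 0 < (p.comp (-X)).leadingCoeff := by
      rw [hlc, he.neg_one_pow, mul_one]; exact h
    obtain ⟨B, hB⟩ := eventually_pos_atTop _ this
    refine ⟨-B, fun x hx => ?_⟩
    have := hB (-x) (by linarith)
    simp only [eval_comp, eval_neg, eval_X, neg_neg] at this
    simpa [he] using this
  · have : 0 < (-(p.comp (-X))).leadingCoeff := by
      rw [leadingCoeff_neg, hlc, (Nat.not_even_iff_odd.mp he).neg_one_pow]
      simpa using h
    obtain ⟨B, hB⟩ := eventually_pos_atTop _ this
    refine ⟨-B, fun x hx => ?_⟩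
    have := hB (-x) (by linarith)
    simp only [eval_neg, eval_comp, eval_X, neg_neg] at this
    simp only [he, if_false]
    linarith

lemma prod_sign (x : ℝ) : ∀ (l : List ℝ), (∀ r ∈ l, x ≠ r) →
    ((l.map (fun r => x - r)).prod ≠ 0 ∧
      (0 < (l.map (fun r => x - r)).prod ↔ Even (l.countP (fun r => decide (x < r)))))
  | [], _ => by simp
  | r :: l, h => by
    have hr : x ≠ r := h r (by simp)
    obtain ⟨h1, h2⟩ := prod_sign x l (fun s hs => h s (by simp [hs]))
    simp only [List.map_cons, List.prod_cons, List.countP_cons, decide_eq_true_eq]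
    rcases lt_trichotomy x r with hlt | heq | hgt
    · refine ⟨mul_ne_zero (by linarith) h1, ?_⟩
      rw [if_pos hlt, Nat.even_add_one, ← h2]
      constructor
      · intro hp hpos; nlinarith
      · intro hnp
        rcases h1.lt_or_gt with hneg | hpos
        · nlinarith
        · exact absurd hpos hnp
    · exact absurd heq hr
    · refine ⟨mul_ne_zero (by linarith) h1, ?_⟩
      rw [if_neg (by linarith), add_zero, ← h2]
      constructor
      · intro hp
        rcases h1.lt_or_gt with hneg | hpos
        · nlinarith
        · exact hpos
      · intro hp; nlinarith

lemma eval_eq_prod {p : ℝ[X]} (hp : RealRooted p) (x : ℝ) :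
    p.eval x = p.leadingCoeff * ((ascRoots p).map (fun r => x - r)).prod := by
  have hs : p.Splits := (Polynomial.splits_iff_card_roots).mpr hp
  conv_lhs => rw [hs.eq_prod_roots]
  rw [eval_mul, eval_C, Polynomial.eval_multiset_prod]
  congr 1
  rw [← coe_ascRoots p]
  simp only [Multiset.map_coe, Multiset.prod_coe]
  congr 1
  rw [List.map_map]
  apply List.map_congr_left
  intro a _
  simp

lemma eval_sign {p : ℝ[X]} (hp : RealRooted p) (hlc : 0 < p.leadingCoeff)
    {x : ℝ} (hx : x ∉ p.roots) :
    p.eval x ≠ 0 ∧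
      (0 < p.eval x ↔ Even ((ascRoots p).countP (fun r => decide (x < r)))) := by
  have hmem : ∀ r ∈ ascRoots p, x ≠ r := by
    intro r hr he
    exact hx (mem_ascRoots.mp (he ▸ hr))
  obtain ⟨h1, h2⟩ := prod_sign x (ascRoots p) hmem
  rw [eval_eq_prod hp]
  refine ⟨mul_ne_zero (ne_of_gt hlc) h1, ?_⟩
  rw [← h2]
  constructor
  · intro h
    rcases h1.lt_or_gt with hneg | hpos
    · nlinarith
    · exact hpos
  · intro h; positivity

/-- number of elements of `l` that are `< x` -/
noncomputable def cntLT (l : List ℝ) (x : ℝ) : ℕ := l.countP (fun y => decide (y < x))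

lemma cntLT_le_length (l : List ℝ) (x : ℝ) : cntLT l x ≤ l.length :=
  List.countP_le_length

lemma sorted_lt_iff_lt_cntLT {l : List ℝ} (hl : l.Pairwise (· ≤ ·)) (x : ℝ) :
    ∀ i (h : i < l.length), (l[i] < x ↔ i < cntLT l x) := by
  induction l with
  | nil => intro i h; simp at h
  | cons a t ih =>
    intro i h
    have hts : t.Pairwise (· ≤ ·) := hl.of_cons
    by_cases hax : a < x
    · have hc : cntLT (a :: t) x = cntLT t x + 1 := by
        simp [cntLT, List.countP_cons, hax]
      cases i with
      | zero => simpa [hc] using hax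
      | succ j =>
        have hj : j < t.length := by simpa using h
        have := ih hts j hj
        simp only [List.getElem_cons_succ, hc]
        rw [this]
        omega
    · have hall : ∀ y ∈ t, ¬ (y < x) := by
        intro y hy
        have : a ≤ y := (List.pairwise_cons.mp hl).1 y hy
        intro hyx; exact hax (lt_of_le_of_lt this hyx)
      have hc : cntLT (a :: t) x = 0 := by
        have ht0 : t.countP (fun y => decide (y < x)) = 0 := by
          rw [List.countP_eq_zero]; intro y hy; simpa using hall y hy
        simp [cntLT, List.countP_cons, hax, ht0]
      rw [hc]
      simp only [Nat.not_lt_zero, iff_false]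
      cases i with
      | zero => simpa using hax
      | succ j =>
        have hj : j < t.length := by simpa using h
        exact hall _ (List.getElem_mem hj)

/-- count of elements above x given a cut position -/
lemma countP_above {x : ℝ} : ∀ (u : List ℝ) (a : ℕ), a ≤ u.length →
    (∀ i (h : i < u.length), (x < u[i] ↔ a ≤ i)) →
    u.countP (fun r => decide (x < r)) = u.length - a
  | [], a, ha, _ => by simp at ha ⊢
  | b :: t, 0, _, h => by
    rw [List.countP_eq_length.mpr]
    · simp
    · intro y hy
      obtain ⟨i, hi, rfl⟩ := List.mem_iff_getElem.mp hy
      simpa using (h i hi).mpr (Nat.zero_le _)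
  | b :: t, (a+1), ha, h => by
    have h0 : ¬ (x < b) := by
      intro hxb
      have := (h 0 (by simp)).mp (by simpa using hxb)
      omega
    have ht : t.countP (fun r => decide (x < r)) = t.length - a := by
      apply countP_above t a (by simpa using ha)
      intro i hi
      have := h (i+1) (by simpa using Nat.succ_lt_succ hi)
      simpa [Nat.succ_le_succ_iff] using this
    simp only [List.countP_cons, List.length_cons]
    rw [ht]
    rw [if_neg (by simpa using h0)]
    omega

/-- The master counting characterization of index-wise inequalities between
sorted lists. -/
lemma sorted_le_iff_cnt {a b : List ℝ} (ha : a.Pairwise (· ≤ ·)) (hb : b.Pairwise (· ≤ ·))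
    (s : ℕ) (hlen : b.length ≤ a.length + s) :
    (∀ i, i < a.length → i + s < b.length → a[i]! ≤ b[i+s]!) ↔
      (∀ x, cntLT b x ≤ cntLT a x + s) := by
  constructor
  · intro h x
    by_contra hc
    push_neg at hc
    set c := cntLT a x with hcdef
    have h1 : c + s < b.length := lt_of_lt_of_le hc (cntLT_le_length b x)
    have h2 : b[c+s] < x := (sorted_lt_iff_lt_cntLT hb x _ h1).mpr hc
    by_cases hca : c < a.length
    · have h3 : ¬ (a[c] < x) := fun hh =>
        absurd ((sorted_lt_iff_lt_cntLT ha x c hca).mp hh) (lt_irrefl c)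
      have h4 := h c hca h1
      rw [getElem!_pos a c hca, getElem!_pos b (c+s) h1] at h4
      push_neg at h3
      linarith
    · have : c ≤ a.length := cntLT_le_length a x
      omega
  · intro h i hia hib
    rw [getElem!_pos a i hia, getElem!_pos b (i+s) hib]
    by_contra hc
    push_neg at hc
    set x := a[i] with hx
    have h1 : i + s < cntLT b x := (sorted_lt_iff_lt_cntLT hb x _ hib).mp hc
    have h2 : cntLT a x ≤ i := by
      by_contra hh
      push_neg at hh
      exact absurd ((sorted_lt_iff_lt_cntLT ha x i hia).mpr hh) (lt_irrefl x)
    have := h x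
    omega

lemma exists_root_between {p : ℝ[X]} {a b : ℝ} (hab : a < b)
    (ha : p.eval a < 0) (hb : 0 < p.eval b) :
    ∃ z, a < z ∧ z < b ∧ p.IsRoot z := by
  obtain ⟨z, hz, hz0⟩ := intermediate_value_Ioo hab.le
    (Continuous.continuousOn p.continuous) ⟨ha, hb⟩
  exact ⟨z, hz.1, hz.2, hz0⟩

lemma exists_root_between' {p : ℝ[X]} {a b : ℝ} (hab : a < b)
    (ha : 0 < p.eval a) (hb : p.eval b < 0) :
    ∃ z, a < z ∧ z < b ∧ p.IsRoot z := by
  obtain ⟨z, hz, hz0⟩ := intermediate_value_Ioo' hab.le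
    (Continuous.continuousOn p.continuous) ⟨hb, ha⟩
  exact ⟨z, hz.1, hz.2, hz0⟩

lemma roots_from_list {p : ℝ[X]} (hp : p ≠ 0) {t : List ℝ} (ht : t.Pairwise (· < ·))
    (hr : ∀ z ∈ t, p.IsRoot z) (hlen : p.natDegree ≤ t.length) :
    p.roots = ↑t ∧ RealRooted p ∧ ascRoots p = t := by
  have hnd : t.Nodup := ht.nodup
  have hle : (↑t : Multiset ℝ) ≤ p.roots := by
    rw [Multiset.le_iff_count]
    intro a
    by_cases ha : a ∈ t
    · rw [Multiset.coe_count, List.count_eq_one_of_mem hnd ha]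
      exact Multiset.one_le_count_iff_mem.mpr (Polynomial.mem_roots'.mpr ⟨hp, hr a ha⟩)
    · rw [Multiset.coe_count, List.count_eq_zero_of_not_mem ha]
      exact Nat.zero_le _
  have hcard : Multiset.card p.roots ≤ Multiset.card (↑t : Multiset ℝ) := by
    rw [Multiset.coe_card]
    exact le_trans (Polynomial.card_roots' p) hlen
  have heq : (↑t : Multiset ℝ) = p.roots := Multiset.eq_of_le_of_card_le hle hcard
  have hrr : RealRooted p := by
    have h1 : Multiset.card p.roots = t.length := by rw [← heq, Multiset.coe_card]
    have h2 := Polynomial.card_roots' p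
    unfold RealRooted
    omega
  exact ⟨heq.symm, hrr, ascRoots_eq_of_sorted heq.symm (ht.imp le_of_lt)⟩

lemma sorted_lt_of_adj {t : List ℝ} (h : ∀ j, j + 1 < t.length → t[j]! < t[j+1]!) :
    t.Pairwise (· < ·) := by
  rw [List.pairwise_iff_getElem]
  have key : ∀ d i, i + d + 1 < t.length → t[i]! < t[i+d+1]! := by
    intro d
    induction d with
    | zero =>
      intro i hi
      exact h i (by omega)
    | succ e ih =>
      intro i hi
      have h1 := ih i (by omega)
      have h2 := h (i+e+1) (by omega)
      rw [show i + (e+1) + 1 = (i+e+1)+1 by omega]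
      exact lt_trans h1 h2
  intro i j hi hj hij
  obtain ⟨d, rfl⟩ : ∃ d, j = i + d + 1 := ⟨j - i - 1, by omega⟩
  have := key d i hj
  rwa [getElem!_pos t i (by omega), getElem!_pos t (i+d+1) (by omega)] at this

/-- Construct one root of `p` in each gap `(y j, y (j+1))` (and above the top point),
given alternating signs ending negative at the top point. -/
lemma gaps (p : ℝ[X]) (hlc : 0 < p.leadingCoeff) (y : List ℝ) (hy : y.Pairwise (· < ·))
    (hsign : ∀ j, j < y.length →
      (Even (y.length - 1 - j) → p.eval y[j]! < 0) ∧
      (¬ Even (y.length - 1 - j) → 0 < p.eval y[j]!)) :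
    ∃ t0 : List ℝ, t0.length = y.length ∧
      (∀ j, j < y.length → y[j]! < t0[j]! ∧ p.IsRoot t0[j]!) ∧
      (∀ j, j + 1 < y.length → t0[j]! < y[j+1]!) := by
  classical
  set k := y.length with hk
  obtain ⟨B0, hB0⟩ := eventually_pos_atTop p hlc
  have hygap : ∀ j, j + 1 < k → y[j]! < y[j+1]! := by
    intro j hj
    rw [getElem!_pos y j (by omega), getElem!_pos y (j+1) (by omega)]
    exact List.pairwise_iff_getElem.mp hy j (j+1) (by omega) (by omega) (by omega)
  set nxt : ℕ → ℝ := fun j => if j + 1 < k then y[j+1]! else max B0 (y[j]! + 1) with hnxt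
  have hnxt_gt : ∀ j, j < k → y[j]! < nxt j := by
    intro j hj
    by_cases h1 : j + 1 < k
    · simp only [hnxt, if_pos h1]; exact hygap j h1
    · simp only [hnxt, if_neg h1]
      exact lt_of_lt_of_le (by linarith) (le_max_right _ _)
  have hroot : ∀ j, j < k → ∃ z, y[j]! < z ∧ z < nxt j ∧ p.IsRoot z := by
    intro j hj
    rcases Nat.even_or_odd (k - 1 - j) with he | ho
    · have hL : p.eval y[j]! < 0 := (hsign j hj).1 he
      have hR : 0 < p.eval (nxt j) := by
        by_cases h1 : j + 1 < k
        · have hpar : ¬ Even (k - 1 - (j+1)) := by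
            rw [Nat.even_iff] at he ⊢
            omega
          simp only [hnxt, if_pos h1]
          exact (hsign (j+1) h1).2 hpar
        · simp only [hnxt, if_neg h1]
          exact hB0 _ (le_max_left _ _)
      exact exists_root_between (hnxt_gt j hj) hL hR
    · have hL : 0 < p.eval y[j]! := (hsign j hj).2 (Nat.not_even_iff_odd.mpr ho)
      have hR : p.eval (nxt j) < 0 := by
        have h1 : j + 1 < k := by
          by_contra h1
          have : k - 1 - j = 0 := by omega
          rw [this] at ho
          exact (Nat.not_even_iff_odd.mpr ho) (Even.zero)
        have hpar : Even (k - 1 - (j+1)) := by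
          rw [Nat.odd_iff] at ho
          rw [Nat.even_iff]
          omega
        simp only [hnxt, if_pos h1]
        exact (hsign (j+1) h1).1 hpar
      exact exists_root_between' (hnxt_gt j hj) hL hR
  set t0 : List ℝ := (List.range k).map
    (fun j => if h : j < k then (hroot j h).choose else 0) with ht0def
  have hlen : t0.length = k := by simp [ht0def]
  have hval : ∀ j (hj : j < k), t0[j]! = (hroot j hj).choose := by
    intro j hj
    rw [getElem!_pos t0 j (by omega)]
    simp only [ht0def, List.getElem_map, List.getElem_range, dif_pos hj]
  refine ⟨t0, hlen, ?_, ?_⟩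
  · intro j hj
    obtain ⟨h1, h2, h3⟩ := (hroot j hj).choose_spec
    rw [hval j hj]
    exact ⟨h1, h3⟩
  · intro j hj
    obtain ⟨h1, h2, h3⟩ := (hroot j (by omega)).choose_spec
    rw [hval j (by omega)]
    have := h2
    simpa only [hnxt, if_pos hj] using this

lemma engine1 (p : ℝ[X]) (hlc : 0 < p.leadingCoeff) (y : List ℝ) (hy : y.Pairwise (· < ·))
    (hdeg : p.natDegree = y.length)
    (hsign : ∀ j, j < y.length →
      (Even (y.length - 1 - j) → p.eval y[j]! < 0) ∧
      (¬ Even (y.length - 1 - j) → 0 < p.eval y[j]!)) :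
    ∃ t : List ℝ, ascRoots p = t ∧ RealRooted p ∧ t.length = y.length ∧
      (∀ j, j < y.length → y[j]! < t[j]!) ∧ (∀ j, j + 1 < y.length → t[j]! < y[j+1]!) := by
  obtain ⟨t0, hlen, hBD, hC⟩ := gaps p hlc y hy hsign
  have hp : p ≠ 0 := fun hh => by simp [hh] at hlc
  have hsort : t0.Pairwise (· < ·) := by
    apply sorted_lt_of_adj
    intro j hj
    rw [hlen] at hj
    calc t0[j]! < y[j+1]! := hC j hj
    _ < t0[j+1]! := (hBD (j+1) hj).1
  have hmem : ∀ z ∈ t0, p.IsRoot z := by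
    intro z hz
    obtain ⟨i, hi, rfl⟩ := List.mem_iff_getElem.mp hz
    rw [← getElem!_pos t0 i hi]
    exact (hBD i (by omega)).2
  obtain ⟨hroots, hrr, hasc⟩ := roots_from_list hp hsort hmem (by omega)
  exact ⟨t0, hasc, hrr, hlen, fun j hj => (hBD j hj).1, hC⟩

lemma engine2 (p : ℝ[X]) (hlc : 0 < p.leadingCoeff) (y : List ℝ) (hy : y.Pairwise (· < ·))
    (hdeg : p.natDegree = y.length + 1)
    (hsign : ∀ j, j < y.length →
      (Even (y.length - 1 - j) → p.eval y[j]! < 0) ∧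
      (¬ Even (y.length - 1 - j) → 0 < p.eval y[j]!)) :
    ∃ t : List ℝ, ascRoots p = t ∧ RealRooted p ∧ t.length = y.length + 1 ∧
      (∀ j, j < y.length → t[j]! < y[j]!) ∧ (∀ j, j < y.length → y[j]! < t[j+1]!) := by
  classical
  have hp : p ≠ 0 := fun hh => by simp [hh] at hlc
  obtain ⟨B0, hB0⟩ := eventually_pos_atTop p hlc
  obtain ⟨A0, hA0⟩ := eventually_sign_atBot p hlc
  set k := y.length with hk
  rcases Nat.eq_zero_or_pos k with hk0 | hkpos
  · -- no points: p has odd degree 1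
    have hdeg1 : p.natDegree = 1 := by omega
    have hodd : ¬ Even p.natDegree := by rw [hdeg1]; simp
    have hA : p.eval (min A0 B0 - 1) < 0 := by
      have := hA0 (min A0 B0 - 1) (by
        have := min_le_left A0 B0
        linarith)
      simpa [hodd] using this
    have hB : 0 < p.eval (max B0 (min A0 B0)) := hB0 _ (le_max_left _ _)
    obtain ⟨z, hz1, hz2, hz3⟩ := exists_root_between
      (by
        have := le_max_right B0 (min A0 B0)
        linarith) hA hB
    obtain ⟨hroots, hrr, hasc⟩ := roots_from_list hp
      (List.pairwise_singleton _ z : ([z] : List ℝ).Pairwise (· < ·))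
      (by intro w hw; simp at hw; rwa [hw]) (by simp [hdeg1])
    refine ⟨[z], hasc, hrr, by simp [hk0], ?_, ?_⟩ <;> intro j hj <;> omega
  · obtain ⟨t0, hlen, hBD, hC⟩ := gaps p hlc y hy hsign
    -- the extra bottom root
    have h0k : 0 < k := hkpos
    set a0 := min A0 (y[0]! - 1) with ha0
    have hy0 : a0 < y[0]! := by
      have := min_le_right A0 (y[0]! - 1)
      linarith
    have hextra : ∃ a, a0 < a ∧ a < y[0]! ∧ p.IsRoot a := by
      have hs0 := hsign 0 h0k
      rcases Nat.even_or_odd (k - 1) with he | hoo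
      · -- p(y0) < 0 ; parity of natDegree = k+1: Even (k+1) ↔ Even (k-1) since k ≥ 1
        have hL : p.eval y[0]! < 0 := hs0.1 (by simpa using he)
        have hpar : Even p.natDegree := by
          rw [hdeg]
          rw [Nat.even_iff] at he ⊢
          omega
        have hA : 0 < p.eval a0 := by
          have := hA0 a0 (min_le_left _ _)
          simpa [hpar] using this
        exact exists_root_between' hy0 hA hL
      · have hL : (0:ℝ) < p.eval y[0]! := hs0.2 (by
          simp only [Nat.sub_zero]
          rw [Nat.even_iff]
          rw [Nat.odd_iff] at hoo
          omega)
        have hpar : ¬ Even p.natDegree := by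
          rw [hdeg]
          rw [Nat.even_iff]
          rw [Nat.odd_iff] at hoo
          omega
        have hA : p.eval a0 < 0 := by
          have := hA0 a0 (min_le_left _ _)
          simpa [hpar] using this
        exact exists_root_between hy0 hA hL
    obtain ⟨a, ha1, ha2, ha3⟩ := hextra
    set t : List ℝ := a :: t0 with htdef
    have hymono : ∀ j, j < k → y[0]! ≤ y[j]! := by
      intro j hj
      rcases Nat.eq_zero_or_pos j with rfl | hj0
      · exact le_refl _
      · rw [getElem!_pos y 0 (by omega), getElem!_pos y j (by omega)]
        exact le_of_lt (List.pairwise_iff_getElem.mp hy 0 j (by omega) (by omega) hj0)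
    have htsort : t.Pairwise (· < ·) := by
      rw [htdef, List.pairwise_cons]
      constructor
      · intro z hz
        obtain ⟨i, hi, rfl⟩ := List.mem_iff_getElem.mp hz
        rw [← getElem!_pos t0 i hi]
        calc a < y[0]! := ha2
        _ ≤ y[i]! := hymono i (by omega)
        _ < t0[i]! := (hBD i (by omega)).1
      · apply sorted_lt_of_adj
        intro j hj
        rw [hlen] at hj
        calc t0[j]! < y[j+1]! := hC j hj
        _ < t0[j+1]! := (hBD (j+1) hj).1
    have hmem : ∀ z ∈ t, p.IsRoot z := by
      intro z hz
      rw [htdef, List.mem_cons] at hz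
      rcases hz with rfl | hz
      · exact ha3
      · obtain ⟨i, hi, rfl⟩ := List.mem_iff_getElem.mp hz
        rw [← getElem!_pos t0 i hi]
        exact (hBD i (by omega)).2
    have htlen : t.length = k + 1 := by simp [htdef, hlen, hk]
    obtain ⟨hroots, hrr, hasc⟩ := roots_from_list hp htsort hmem (by omega)
    have htval0 : t[0]! = a := by rw [getElem!_pos t 0 (by omega)]; simp [htdef]
    have htvalS : ∀ j, j < k → t[j+1]! = t0[j]! := by
      intro j hj
      rw [getElem!_pos t (j+1) (by omega), getElem!_pos t0 j (by omega)]
      simp [htdef]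
    refine ⟨t, hasc, hrr, htlen, ?_, ?_⟩
    · intro j hj
      rcases Nat.eq_zero_or_pos j with rfl | hj0
      · rw [htval0]; exact ha2
      · obtain ⟨i, rfl⟩ : ∃ i, j = i + 1 := ⟨j - 1, by omega⟩
        rw [htvalS i (by omega)]
        exact hC i hj
    · intro j hj
      rw [htvalS j hj]
      exact (hBD j hj).1

lemma getElem!_mem {l : List ℝ} {i : ℕ} (h : i < l.length) : l[i]! ∈ l := by
  rw [getElem!_pos l i h]
  exact List.getElem_mem h

lemma getElem!_mem_roots {p : ℝ[X]} {i : ℕ} (h : i < (ascRoots p).length) :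
    (ascRoots p)[i]! ∈ p.roots := mem_ascRoots.mp (getElem!_mem h)

lemma length_ascRoots' {p : ℝ[X]} (hp : RealRooted p) :
    (ascRoots p).length = p.natDegree := by
  rw [← hp, ← Multiset.coe_card, coe_ascRoots]

lemma sorted_le_getElem! {l : List ℝ} (hl : l.Pairwise (· ≤ ·)) {i j : ℕ} (hij : i ≤ j)
    (hj : j < l.length) : l[i]! ≤ l[j]! := by
  rcases Nat.lt_or_ge i j with h | h
  · rw [getElem!_pos l i (by omega), getElem!_pos l j hj]
    exact List.pairwise_iff_getElem.mp hl i j (by omega) hj h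
  · have : i = j := by omega
    rw [this]

lemma natDegree_eq_of_coeff {p : ℝ[X]} {N : ℕ} (hle : p.natDegree ≤ N) (h : 0 < p.coeff N) :
    p.natDegree = N ∧ 0 < p.leadingCoeff ∧ p ≠ 0 := by
  have h1 : N ≤ p.natDegree := le_natDegree_of_ne_zero (ne_of_gt h)
  have h2 : p.natDegree = N := le_antisymm hle h1
  refine ⟨h2, by rwa [Polynomial.leadingCoeff, h2], fun hh => by simp [hh] at h⟩

lemma P_spec (f g : ℝ[X]) (hf : f ≠ 0) (hg : g ≠ 0)
    (hlf : 0 < f.leadingCoeff) (hlg : 0 < g.leadingCoeff)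
    (hd : g.natDegree = f.natDegree ∨ g.natDegree = f.natDegree + 1) :
    ((1+X)*f + g).natDegree = f.natDegree + 1 ∧ 0 < ((1+X)*f + g).leadingCoeff ∧
      (1+X)*f + g ≠ 0 := by
  set n := f.natDegree with hn
  have hco : ((1+X)*f + g).coeff (n+1) = f.coeff (n+1) + f.coeff n + g.coeff (n+1) := by
    rw [show (1+X)*f + g = f + X*f + g by ring]
    rw [Polynomial.coeff_add, Polynomial.coeff_add, Polynomial.coeff_X_mul]
  have hf1 : f.coeff (n+1) = 0 := coeff_eq_zero_of_natDegree_lt (by omega)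
  have hfn : f.coeff n = f.leadingCoeff := rfl
  have hgpos : 0 ≤ g.coeff (n+1) := by
    rcases hd with hd | hd
    · rw [coeff_eq_zero_of_natDegree_lt (by omega)]
    · rw [show n+1 = g.natDegree by omega]
      exact le_of_lt hlg
  have hpos : 0 < ((1+X)*f + g).coeff (n+1) := by
    rw [hco, hf1, hfn]
    linarith
  have hle : ((1+X)*f + g).natDegree ≤ n + 1 := by
    apply le_trans (Polynomial.natDegree_add_le _ _)
    apply max_le
    · apply le_trans (Polynomial.natDegree_mul_le)
      have : (1 + X : ℝ[X]).natDegree = 1 := by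
        rw [show (1 + X : ℝ[X]) = X + C 1 by rw [Polynomial.C_1]; ring]
        exact natDegree_X_add_C _
      omega
    · omega
  exact natDegree_eq_of_coeff hle hpos

lemma Q_spec (f g : ℝ[X]) (hf : f ≠ 0) (hg : g ≠ 0)
    (hlf : 0 < f.leadingCoeff) (hlg : 0 < g.leadingCoeff)
    (hd : g.natDegree = f.natDegree ∨ g.natDegree = f.natDegree + 1) :
    (X*f + (1+X)*g).natDegree = g.natDegree + 1 ∧ 0 < (X*f + (1+X)*g).leadingCoeff ∧
      X*f + (1+X)*g ≠ 0 := by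
  set N := g.natDegree + 1 with hN
  have hco : (X*f + (1+X)*g).coeff N = f.coeff g.natDegree + (g.coeff N + g.coeff g.natDegree) := by
    rw [show X*f + (1+X)*g = X*f + (g + X*g) by ring]
    rw [Polynomial.coeff_add, Polynomial.coeff_add, hN, Polynomial.coeff_X_mul,
      Polynomial.coeff_X_mul]
  have hg1 : g.coeff N = 0 := coeff_eq_zero_of_natDegree_lt (by omega)
  have hgn : g.coeff g.natDegree = g.leadingCoeff := rfl
  have hfpos : 0 ≤ f.coeff g.natDegree := by
    rcases hd with hd | hd
    · rw [hd]; exact le_of_lt hlf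
    · rw [coeff_eq_zero_of_natDegree_lt (by omega)]
  have hpos : 0 < (X*f + (1+X)*g).coeff N := by
    rw [hco, hg1, hgn]
    linarith
  have hle : (X*f + (1+X)*g).natDegree ≤ N := by
    apply le_trans (Polynomial.natDegree_add_le _ _)
    apply max_le
    · apply le_trans (Polynomial.natDegree_mul_le)
      rcases hd with hd | hd <;> simp [Polynomial.natDegree_X] <;> omega
    · apply le_trans (Polynomial.natDegree_mul_le)
      have : (1 + X : ℝ[X]).natDegree = 1 := by
        rw [show (1 + X : ℝ[X]) = X + C 1 by rw [Polynomial.C_1]; ring]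
        exact natDegree_X_add_C _
      omega
  exact natDegree_eq_of_coeff hle hpos


lemma ne_of_disjoint {f g : ℝ[X]} (hdisj : ∀ r, r ∈ f.roots → r ∉ g.roots)
    {x y : ℝ} (hx : x ∈ f.roots) (hy : y ∈ g.roots) : x ≠ y :=
  fun h => hdisj x hx (h ▸ hy)

lemma eval_Q_eq (f g : ℝ[X]) (x : ℝ) :
    (X*f + (1+X)*g).eval x = (1+x) * (((1+X)*f + g).eval x) - (1+x+x^2) * f.eval x := by
  simp only [eval_add, eval_mul, eval_one, eval_X, eval_pow]
  ring

lemma one_add_self_add_sq_pos (x : ℝ) : 0 < 1 + x + x^2 := by nlinarith [sq_nonneg (x + 1/2)]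

lemma main_reduced (f g : ℝ[X]) (hf0 : f ≠ 0) (hg0 : g ≠ 0)
    (hlf : 0 < f.leadingCoeff) (hlg : 0 < g.leadingCoeff)
    (hfg : Interlaces f g)
    (hdisj : ∀ r, r ∈ f.roots → r ∉ g.roots) :
    Interlaces ((1+X)*f + g) (X*f + (1+X)*g) := by
  obtain ⟨hgRR, hfRR, hcases⟩ := hfg
  set v := ascRoots f with hvdef
  set u := ascRoots g with hudef
  have hvlen : v.length = f.natDegree := length_ascRoots' hfRR
  have hulen : u.length = g.natDegree := length_ascRoots' hgRR
  have hvmem : ∀ i, i < v.length → v[i]! ∈ f.roots := fun i h => getElem!_mem_roots h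
  have humem : ∀ i, i < u.length → u[i]! ∈ g.roots := fun i h => getElem!_mem_roots h
  have hvsortle : v.Pairwise (· ≤ ·) := ascRoots_sorted_s2 f
  have husortle : u.Pairwise (· ≤ ·) := ascRoots_sorted_s2 g
  rcases hcases with ⟨hdeq, hvu, huv⟩ | ⟨hdeq, hBint⟩
  · -- CASE A : deg g = deg f = n
    set n := f.natDegree with hn
    have hgn : g.natDegree = n := hdeq
    have hun : u.length = n := by omega
    have hvn : v.length = n := by omega
    have hvu' : ∀ i, i < n → v[i]! < u[i]! := fun i hi =>
      lt_of_le_of_ne (hvu i (by omega)) (ne_of_disjoint hdisj (hvmem i (by omega)) (humem i (by omega)))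
    have huv' : ∀ i, i + 1 < n → u[i]! < v[i+1]! := fun i hi =>
      lt_of_le_of_ne (huv i (by omega)) (Ne.symm (ne_of_disjoint hdisj (hvmem (i+1) (by omega)) (humem i (by omega))))
    have hvsort : v.Pairwise (· < ·) := by
      apply sorted_lt_of_adj
      intro j hj
      calc v[j]! < u[j]! := hvu' j (by omega)
      _ ≤ v[j+1]! := huv j (by omega)
    obtain ⟨hPdeg, hPlc, hPne⟩ := P_spec f g hf0 hg0 hlf hlg (Or.inl hgn)
    obtain ⟨hQdeg, hQlc, hQne⟩ := Q_spec f g hf0 hg0 hlf hlg (Or.inl hgn)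
    have hsignP : ∀ j, j < v.length →
        (Even (v.length - 1 - j) → ((1+X)*f + g).eval v[j]! < 0) ∧
        (¬ Even (v.length - 1 - j) → 0 < ((1+X)*f + g).eval v[j]!) := by
      intro j hj
      have hj' : j < n := by omega
      have hfv : f.eval v[j]! = 0 := (Polynomial.mem_roots'.mp (hvmem j hj)).2
      have hPv : ((1+X)*f + g).eval v[j]! = g.eval v[j]! := by
        simp only [eval_add, eval_mul, hfv, mul_zero, zero_add]
      have hnotroot : v[j]! ∉ g.roots := hdisj _ (hvmem j hj)
      obtain ⟨hne, hiff⟩ := eval_sign hgRR hlg hnotroot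
      have hcnt : u.countP (fun r => decide (v[j]! < r)) = u.length - j := by
        apply countP_above u j (by omega)
        intro i hi
        rw [← getElem!_pos u i hi]
        constructor
        · intro hlt
          by_contra hij
          push_neg at hij
          have h1 : u[i]! ≤ v[i+1]! := le_of_lt (huv' i (by omega))
          have h2 : v[i+1]! ≤ v[j]! := sorted_le_getElem! hvsortle (by omega) (by omega)
          linarith
        · intro hij
          calc v[j]! < u[j]! := hvu' j hj'
          _ ≤ u[i]! := sorted_le_getElem! husortle hij (by omega)
      rw [hcnt] at hiff
      rw [hPv]
      constructor
      · intro he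
        have hodd : ¬ Even (u.length - j) := by
          rw [Nat.even_iff] at he ⊢
          omega
        rcases (lt_or_gt_of_ne hne) with h | h
        · exact h
        · exact absurd (hiff.mp h) hodd
      · intro he
        have heven : Even (u.length - j) := by
          rw [Nat.even_iff] at he ⊢
          omega
        exact hiff.mpr heven
    obtain ⟨w, hwasc, hPRR, hwlen, hwv, hvw⟩ :=
      engine2 ((1+X)*f + g) hPlc v hvsort (by omega) hsignP
    have hwsortle : w.Pairwise (· ≤ ·) := hwasc ▸ ascRoots_sorted_s2 _
    have hwlen' : w.length = n + 1 := by omega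
    have hwroot : ∀ j, j < w.length → ((1+X)*f + g).eval w[j]! = 0 := by
      intro j hj
      have : w[j]! ∈ ((1+X)*f + g).roots := by
        rw [← hwasc]
        exact getElem!_mem_roots (by rw [hwasc]; omega)
      exact (Polynomial.mem_roots'.mp this).2
    have hwsort : w.Pairwise (· < ·) := by
      apply sorted_lt_of_adj
      intro j hj
      calc w[j]! < v[j]! := hwv j (by omega)
      _ < w[j+1]! := hvw j (by omega)
    have hsignQ : ∀ j, j < w.length →
        (Even (w.length - 1 - j) → (X*f + (1+X)*g).eval w[j]! < 0) ∧
        (¬ Even (w.length - 1 - j) → 0 < (X*f + (1+X)*g).eval w[j]!) := by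
      intro j hj
      have hj' : j < n + 1 := by omega
      have hfw : w[j]! ∉ f.roots := by
        intro hmem
        have hfv : f.eval w[j]! = 0 := (Polynomial.mem_roots'.mp hmem).2
        have hgv : g.eval w[j]! = 0 := by
          have := hwroot j hj
          simp only [eval_add, eval_mul, hfv, mul_zero, zero_add] at this
          exact this
        exact hdisj _ hmem (Polynomial.mem_roots'.mpr ⟨hg0, hgv⟩)
      obtain ⟨hne, hiff⟩ := eval_sign hfRR hlf hfw
      have hcnt : v.countP (fun r => decide (w[j]! < r)) = v.length - j := by
        apply countP_above v j (by omega)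
        intro i hi
        rw [← getElem!_pos v i hi]
        constructor
        · intro hlt
          by_contra hij
          push_neg at hij
          have h1 : v[i]! < w[i+1]! := hvw i (by omega)
          have h2 : w[i+1]! ≤ w[j]! := sorted_le_getElem! hwsortle (by omega) (by omega)
          linarith
        · intro hij
          calc w[j]! ≤ w[i]! := sorted_le_getElem! hwsortle (by omega) (by omega)
          _ < v[i]! := hwv i (by omega)
      rw [hcnt] at hiff
      have hQw : (X*f + (1+X)*g).eval w[j]! = -((1 + w[j]! + w[j]!^2) * f.eval w[j]!) := by
        rw [eval_Q_eq, hwroot j hj]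
        ring
      have hposq := one_add_self_add_sq_pos w[j]!
      constructor
      · intro he
        have heven : Even (v.length - j) := by
          rw [Nat.even_iff] at he ⊢
          omega
        have hpos := hiff.mpr heven
        rw [hQw]
        nlinarith
      · intro he
        have hodd : ¬ Even (v.length - j) := by
          rw [Nat.even_iff] at he ⊢
          omega
        have hneg : f.eval w[j]! < 0 := by
          rcases (lt_or_gt_of_ne hne) with h | h
          · exact h
          · exact absurd (hiff.mp h) hodd
        rw [hQw]
        nlinarith
    obtain ⟨t, htasc, hQRR, htlen, hwt, htw⟩ :=
      engine1 (X*f + (1+X)*g) hQlc w hwsort (by omega) hsignQ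
    refine ⟨hQRR, hPRR, Or.inl ⟨by omega, ?_, ?_⟩⟩
    · intro i hi
      rw [hwasc, htasc]
      exact le_of_lt (hwt i (by omega))
    · intro i hi
      rw [hwasc, htasc]
      exact le_of_lt (htw i (by omega))
  · -- CASE B : deg g = deg f + 1
    set m := f.natDegree with hm
    have hgm : g.natDegree = m + 1 := hdeq
    have hun : u.length = m + 1 := by omega
    have hvn : v.length = m := by omega
    have hgv : ∀ i, i < m → u[i]! < v[i]! := fun i hi =>
      lt_of_le_of_ne ((hBint i (by omega)).1) (Ne.symm (ne_of_disjoint hdisj (hvmem i (by omega)) (humem i (by omega))))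
    have hvg : ∀ i, i < m → v[i]! < u[i+1]! := fun i hi =>
      lt_of_le_of_ne ((hBint i (by omega)).2) (ne_of_disjoint hdisj (hvmem i (by omega)) (humem (i+1) (by omega)))
    have hvsort : v.Pairwise (· < ·) := by
      apply sorted_lt_of_adj
      intro j hj
      calc v[j]! < u[j+1]! := hvg j (by omega)
      _ ≤ v[j+1]! := (hBint (j+1) (by omega)).1
    obtain ⟨hPdeg, hPlc, hPne⟩ := P_spec f g hf0 hg0 hlf hlg (Or.inr hgm)
    obtain ⟨hQdeg, hQlc, hQne⟩ := Q_spec f g hf0 hg0 hlf hlg (Or.inr hgm)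
    have hsignP : ∀ j, j < v.length →
        (Even (v.length - 1 - j) → ((1+X)*f + g).eval v[j]! < 0) ∧
        (¬ Even (v.length - 1 - j) → 0 < ((1+X)*f + g).eval v[j]!) := by
      intro j hj
      have hj' : j < m := by omega
      have hfv : f.eval v[j]! = 0 := (Polynomial.mem_roots'.mp (hvmem j hj)).2
      have hPv : ((1+X)*f + g).eval v[j]! = g.eval v[j]! := by
        simp only [eval_add, eval_mul, hfv, mul_zero, zero_add]
      have hnotroot : v[j]! ∉ g.roots := hdisj _ (hvmem j hj)
      obtain ⟨hne, hiff⟩ := eval_sign hgRR hlg hnotroot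
      have hcnt : u.countP (fun r => decide (v[j]! < r)) = u.length - (j+1) := by
        apply countP_above u (j+1) (by omega)
        intro i hi
        rw [← getElem!_pos u i hi]
        constructor
        · intro hlt
          by_contra hij
          push_neg at hij
          have h1 : u[i]! ≤ v[i]! := by
            rcases Nat.lt_or_ge i m with h | h
            · exact le_of_lt (hgv i h)
            · omega
          have h1' : u[i]! ≤ v[j]! :=
            le_trans ((hBint i (by omega)).1) (sorted_le_getElem! hvsortle (by omega) (by omega))
          linarith
        · intro hij
          calc v[j]! < u[j+1]! := hvg j hj'
          _ ≤ u[i]! := sorted_le_getElem! husortle hij (by omega)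
      rw [hcnt] at hiff
      rw [hPv]
      constructor
      · intro he
        have hodd : ¬ Even (u.length - (j+1)) := by
          rw [Nat.even_iff] at he ⊢
          omega
        rcases (lt_or_gt_of_ne hne) with h | h
        · exact h
        · exact absurd (hiff.mp h) hodd
      · intro he
        have heven : Even (u.length - (j+1)) := by
          rw [Nat.even_iff] at he ⊢
          omega
        exact hiff.mpr heven
    obtain ⟨w, hwasc, hPRR, hwlen, hwv, hvw⟩ :=
      engine2 ((1+X)*f + g) hPlc v hvsort (by omega) hsignP
    have hwsortle : w.Pairwise (· ≤ ·) := hwasc ▸ ascRoots_sorted_s2 _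
    have hwlen' : w.length = m + 1 := by omega
    have hwroot : ∀ j, j < w.length → ((1+X)*f + g).eval w[j]! = 0 := by
      intro j hj
      have : w[j]! ∈ ((1+X)*f + g).roots := by
        rw [← hwasc]
        exact getElem!_mem_roots (by rw [hwasc]; omega)
      exact (Polynomial.mem_roots'.mp this).2
    have hwsort : w.Pairwise (· < ·) := by
      apply sorted_lt_of_adj
      intro j hj
      calc w[j]! < v[j]! := hwv j (by omega)
      _ < w[j+1]! := hvw j (by omega)
    have hsignQ : ∀ j, j < w.length →
        (Even (w.length - 1 - j) → (X*f + (1+X)*g).eval w[j]! < 0) ∧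
        (¬ Even (w.length - 1 - j) → 0 < (X*f + (1+X)*g).eval w[j]!) := by
      intro j hj
      have hj' : j < m + 1 := by omega
      have hfw : w[j]! ∉ f.roots := by
        intro hmem
        have hfv : f.eval w[j]! = 0 := (Polynomial.mem_roots'.mp hmem).2
        have hgv' : g.eval w[j]! = 0 := by
          have := hwroot j hj
          simp only [eval_add, eval_mul, hfv, mul_zero, zero_add] at this
          exact this
        exact hdisj _ hmem (Polynomial.mem_roots'.mpr ⟨hg0, hgv'⟩)
      obtain ⟨hne, hiff⟩ := eval_sign hfRR hlf hfw
      have hcnt : v.countP (fun r => decide (w[j]! < r)) = v.length - j := by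
        apply countP_above v j (by omega)
        intro i hi
        rw [← getElem!_pos v i hi]
        constructor
        · intro hlt
          by_contra hij
          push_neg at hij
          have h1 : v[i]! < w[i+1]! := hvw i (by omega)
          have h2 : w[i+1]! ≤ w[j]! := sorted_le_getElem! hwsortle (by omega) (by omega)
          linarith
        · intro hij
          calc w[j]! ≤ w[i]! := sorted_le_getElem! hwsortle (by omega) (by omega)
          _ < v[i]! := hwv i (by omega)
      rw [hcnt] at hiff
      have hQw : (X*f + (1+X)*g).eval w[j]! = -((1 + w[j]! + w[j]!^2) * f.eval w[j]!) := by
        rw [eval_Q_eq, hwroot j hj]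
        ring
      have hposq := one_add_self_add_sq_pos w[j]!
      constructor
      · intro he
        have heven : Even (v.length - j) := by
          rw [Nat.even_iff] at he ⊢
          omega
        have hpos := hiff.mpr heven
        rw [hQw]
        nlinarith
      · intro he
        have hodd : ¬ Even (v.length - j) := by
          rw [Nat.even_iff] at he ⊢
          omega
        have hneg : f.eval w[j]! < 0 := by
          rcases (lt_or_gt_of_ne hne) with h | h
          · exact h
          · exact absurd (hiff.mp h) hodd
        rw [hQw]
        nlinarith
    obtain ⟨t, htasc, hQRR, htlen, htw, hwt⟩ :=
      engine2 (X*f + (1+X)*g) hQlc w hwsort (by omega) hsignQ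
    refine ⟨hQRR, hPRR, Or.inr ⟨by omega, ?_⟩⟩
    intro i hi
    rw [hwasc, htasc]
    exact ⟨le_of_lt (htw i (by omega)), le_of_lt (hwt i (by omega))⟩

lemma cntLT_ascRoots (h : ℝ[X]) (x : ℝ) :
    cntLT (ascRoots h) x = Multiset.countP (fun y => y < x) h.roots := by
  rw [← coe_ascRoots h, Multiset.coe_countP]
  rfl

lemma interlaces_mul_X_sub_C {p q : ℝ[X]} (hp : p ≠ 0) (hq : q ≠ 0) (r : ℝ)
    (h : Interlaces p q) : Interlaces ((X - C r) * p) ((X - C r) * q) := by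
  obtain ⟨hqRR, hpRR, hcases⟩ := h
  have hlin : (X - C r : ℝ[X]) ≠ 0 := X_sub_C_ne_zero r
  have hPne : (X - C r) * p ≠ 0 := mul_ne_zero hlin hp
  have hQne : (X - C r) * q ≠ 0 := mul_ne_zero hlin hq
  have hProots : ((X - C r) * p).roots = r ::ₘ p.roots := by
    rw [Polynomial.roots_mul hPne, Polynomial.roots_X_sub_C, Multiset.singleton_add]
  have hQroots : ((X - C r) * q).roots = r ::ₘ q.roots := by
    rw [Polynomial.roots_mul hQne, Polynomial.roots_X_sub_C, Multiset.singleton_add]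
  have hPdeg : ((X - C r) * p).natDegree = p.natDegree + 1 := by
    rw [Polynomial.natDegree_mul hlin hp, Polynomial.natDegree_X_sub_C]
    omega
  have hQdeg : ((X - C r) * q).natDegree = q.natDegree + 1 := by
    rw [Polynomial.natDegree_mul hlin hq, Polynomial.natDegree_X_sub_C]
    omega
  have hPRR : RealRooted ((X - C r) * p) := by
    unfold RealRooted at hpRR ⊢
    rw [hProots, hPdeg, Multiset.card_cons]
    omega
  have hQRR : RealRooted ((X - C r) * q) := by
    unfold RealRooted at hqRR ⊢
    rw [hQroots, hQdeg, Multiset.card_cons]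
    omega
  have hcntP : ∀ x, cntLT (ascRoots ((X - C r) * p)) x =
      cntLT (ascRoots p) x + (if r < x then 1 else 0) := by
    intro x
    rw [cntLT_ascRoots, cntLT_ascRoots, hProots, Multiset.countP_cons]
  have hcntQ : ∀ x, cntLT (ascRoots ((X - C r) * q)) x =
      cntLT (ascRoots q) x + (if r < x then 1 else 0) := by
    intro x
    rw [cntLT_ascRoots, cntLT_ascRoots, hQroots, Multiset.countP_cons]
  have hla : (ascRoots p).length = p.natDegree := length_ascRoots' hpRR
  have hlb : (ascRoots q).length = q.natDegree := length_ascRoots' hqRR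
  have hlA : (ascRoots ((X - C r) * p)).length = p.natDegree + 1 := by
    rw [length_ascRoots' hPRR, hPdeg]
  have hlB : (ascRoots ((X - C r) * q)).length = q.natDegree + 1 := by
    rw [length_ascRoots' hQRR, hQdeg]
  have hsa := ascRoots_sorted_s2 p
  have hsb := ascRoots_sorted_s2 q
  have hsA := ascRoots_sorted_s2 ((X - C r) * p)
  have hsB := ascRoots_sorted_s2 ((X - C r) * q)
  rcases hcases with ⟨hdeq, h1, h2⟩ | ⟨hdeq, hB⟩
  · refine ⟨hQRR, hPRR, Or.inl ⟨by omega, ?_, ?_⟩⟩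
    · have hc1 : ∀ x, cntLT (ascRoots q) x ≤ cntLT (ascRoots p) x + 0 :=
        (sorted_le_iff_cnt hsa hsb 0 (by omega)).mp
          (fun i hi hj => by simpa using h1 i (by omega))
      have hc1' : ∀ x, cntLT (ascRoots ((X - C r) * q)) x ≤
          cntLT (ascRoots ((X - C r) * p)) x + 0 := by
        intro x
        rw [hcntP, hcntQ]
        have := hc1 x
        omega
      intro i hi
      have := (sorted_le_iff_cnt hsA hsB 0 (by omega)).mpr hc1' i (by omega) (by omega)
      simpa using this
    · have hc2 : ∀ x, cntLT (ascRoots p) x ≤ cntLT (ascRoots q) x + 1 :=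
        (sorted_le_iff_cnt hsb hsa 1 (by omega)).mp
          (fun i hi hj => h2 i (by omega))
      have hc2' : ∀ x, cntLT (ascRoots ((X - C r) * p)) x ≤
          cntLT (ascRoots ((X - C r) * q)) x + 1 := by
        intro x
        rw [hcntP, hcntQ]
        have := hc2 x
        omega
      intro i hi
      exact (sorted_le_iff_cnt hsB hsA 1 (by omega)).mpr hc2' i (by omega) (by omega)
  · refine ⟨hQRR, hPRR, Or.inr ⟨by omega, ?_⟩⟩
    have hc1 : ∀ x, cntLT (ascRoots p) x ≤ cntLT (ascRoots q) x + 0 :=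
      (sorted_le_iff_cnt hsb hsa 0 (by omega)).mp
        (fun i hi hj => by simpa using (hB i (by omega)).1)
    have hc2 : ∀ x, cntLT (ascRoots q) x ≤ cntLT (ascRoots p) x + 1 :=
      (sorted_le_iff_cnt hsa hsb 1 (by omega)).mp
        (fun i hi hj => (hB i (by omega)).2)
    have hc1' : ∀ x, cntLT (ascRoots ((X - C r) * p)) x ≤
        cntLT (ascRoots ((X - C r) * q)) x + 0 := by
      intro x
      rw [hcntP, hcntQ]
      have := hc1 x
      omega
    have hc2' : ∀ x, cntLT (ascRoots ((X - C r) * q)) x ≤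
        cntLT (ascRoots ((X - C r) * p)) x + 1 := by
      intro x
      rw [hcntP, hcntQ]
      have := hc2 x
      omega
    intro i hi
    constructor
    · have := (sorted_le_iff_cnt hsB hsA 0 (by omega)).mpr hc1' i (by omega) (by omega)
      simpa using this
    · exact (sorted_le_iff_cnt hsA hsB 1 (by omega)).mpr hc2' i (by omega) (by omega)

lemma interlaces_of_mul {p q : ℝ[X]} (hp : p ≠ 0) (hq : q ≠ 0) (r : ℝ)
    (h : Interlaces ((X - C r) * p) ((X - C r) * q)) : Interlaces p q := by
  obtain ⟨hQRR, hPRR, hcases⟩ := h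
  have hlin : (X - C r : ℝ[X]) ≠ 0 := X_sub_C_ne_zero r
  have hPne : (X - C r) * p ≠ 0 := mul_ne_zero hlin hp
  have hQne : (X - C r) * q ≠ 0 := mul_ne_zero hlin hq
  have hProots : ((X - C r) * p).roots = r ::ₘ p.roots := by
    rw [Polynomial.roots_mul hPne, Polynomial.roots_X_sub_C, Multiset.singleton_add]
  have hQroots : ((X - C r) * q).roots = r ::ₘ q.roots := by
    rw [Polynomial.roots_mul hQne, Polynomial.roots_X_sub_C, Multiset.singleton_add]
  have hPdeg : ((X - C r) * p).natDegree = p.natDegree + 1 := by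
    rw [Polynomial.natDegree_mul hlin hp, Polynomial.natDegree_X_sub_C]
    omega
  have hQdeg : ((X - C r) * q).natDegree = q.natDegree + 1 := by
    rw [Polynomial.natDegree_mul hlin hq, Polynomial.natDegree_X_sub_C]
    omega
  have hpRR : RealRooted p := by
    unfold RealRooted at hPRR ⊢
    rw [hProots, hPdeg, Multiset.card_cons] at hPRR
    omega
  have hqRR : RealRooted q := by
    unfold RealRooted at hQRR ⊢
    rw [hQroots, hQdeg, Multiset.card_cons] at hQRR
    omega
  have hcntP : ∀ x, cntLT (ascRoots ((X - C r) * p)) x =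
      cntLT (ascRoots p) x + (if r < x then 1 else 0) := by
    intro x
    rw [cntLT_ascRoots, cntLT_ascRoots, hProots, Multiset.countP_cons]
  have hcntQ : ∀ x, cntLT (ascRoots ((X - C r) * q)) x =
      cntLT (ascRoots q) x + (if r < x then 1 else 0) := by
    intro x
    rw [cntLT_ascRoots, cntLT_ascRoots, hQroots, Multiset.countP_cons]
  have hla : (ascRoots p).length = p.natDegree := length_ascRoots' hpRR
  have hlb : (ascRoots q).length = q.natDegree := length_ascRoots' hqRR
  have hlA : (ascRoots ((X - C r) * p)).length = p.natDegree + 1 := by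
    rw [length_ascRoots' hPRR, hPdeg]
  have hlB : (ascRoots ((X - C r) * q)).length = q.natDegree + 1 := by
    rw [length_ascRoots' hQRR, hQdeg]
  have hsa := ascRoots_sorted_s2 p
  have hsb := ascRoots_sorted_s2 q
  have hsA := ascRoots_sorted_s2 ((X - C r) * p)
  have hsB := ascRoots_sorted_s2 ((X - C r) * q)
  rcases hcases with ⟨hdeq, h1, h2⟩ | ⟨hdeq, hB⟩
  · refine ⟨hqRR, hpRR, Or.inl ⟨by omega, ?_, ?_⟩⟩
    · have hc1 : ∀ x, cntLT (ascRoots ((X - C r) * q)) x ≤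
          cntLT (ascRoots ((X - C r) * p)) x + 0 :=
        (sorted_le_iff_cnt hsA hsB 0 (by omega)).mp
          (fun i hi hj => by simpa using h1 i (by omega))
      have hc1' : ∀ x, cntLT (ascRoots q) x ≤ cntLT (ascRoots p) x + 0 := by
        intro x
        have := hc1 x
        rw [hcntP, hcntQ] at this
        omega
      intro i hi
      have := (sorted_le_iff_cnt hsa hsb 0 (by omega)).mpr hc1' i (by omega) (by omega)
      simpa using this
    · have hc2 : ∀ x, cntLT (ascRoots ((X - C r) * p)) x ≤
          cntLT (ascRoots ((X - C r) * q)) x + 1 :=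
        (sorted_le_iff_cnt hsB hsA 1 (by omega)).mp
          (fun i hi hj => h2 i (by omega))
      have hc2' : ∀ x, cntLT (ascRoots p) x ≤ cntLT (ascRoots q) x + 1 := by
        intro x
        have := hc2 x
        rw [hcntP, hcntQ] at this
        omega
      intro i hi
      exact (sorted_le_iff_cnt hsb hsa 1 (by omega)).mpr hc2' i (by omega) (by omega)
  · refine ⟨hqRR, hpRR, Or.inr ⟨by omega, ?_⟩⟩
    have hc1 : ∀ x, cntLT (ascRoots ((X - C r) * p)) x ≤
        cntLT (ascRoots ((X - C r) * q)) x + 0 :=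
      (sorted_le_iff_cnt hsB hsA 0 (by omega)).mp
        (fun i hi hj => by simpa using (hB i (by omega)).1)
    have hc2 : ∀ x, cntLT (ascRoots ((X - C r) * q)) x ≤
        cntLT (ascRoots ((X - C r) * p)) x + 1 :=
      (sorted_le_iff_cnt hsA hsB 1 (by omega)).mp
        (fun i hi hj => (hB i (by omega)).2)
    have hc1' : ∀ x, cntLT (ascRoots p) x ≤ cntLT (ascRoots q) x + 0 := by
      intro x
      have := hc1 x
      rw [hcntP, hcntQ] at this
      omega
    have hc2' : ∀ x, cntLT (ascRoots q) x ≤ cntLT (ascRoots p) x + 1 := by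
      intro x
      have := hc2 x
      rw [hcntP, hcntQ] at this
      omega
    intro i hi
    constructor
    · have := (sorted_le_iff_cnt hsb hsa 0 (by omega)).mpr hc1' i (by omega) (by omega)
      simpa using this
    · exact (sorted_le_iff_cnt hsa hsb 1 (by omega)).mpr hc2' i (by omega) (by omega)

lemma main_pos (N : ℕ) : ∀ f g : ℝ[X], f.natDegree ≤ N → f ≠ 0 → g ≠ 0 →
    0 < f.leadingCoeff → 0 < g.leadingCoeff → Interlaces f g →
    Interlaces ((1+X)*f + g) (X*f + (1+X)*g) := by
  induction N with
  | zero =>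
    intro f g hN hf hg hlf hlg hfg
    apply main_reduced f g hf hg hlf hlg hfg
    intro r hr
    have h1 := Polynomial.card_roots' f
    have h2 : f.roots = 0 := Multiset.card_eq_zero.mp (by omega)
    rw [h2] at hr
    simp at hr
  | succ N ih =>
    intro f g hN hf hg hlf hlg hfg
    by_cases hex : ∃ r, r ∈ f.roots ∧ r ∈ g.roots
    · obtain ⟨r, hrf, hrg⟩ := hex
      set f1 := f /ₘ (X - C r) with hf1def
      set g1 := g /ₘ (X - C r) with hg1def
      have hf1 : (X - C r) * f1 = f :=
        mul_divByMonic_eq_iff_isRoot.mpr (Polynomial.isRoot_of_mem_roots hrf)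
      have hg1 : (X - C r) * g1 = g :=
        mul_divByMonic_eq_iff_isRoot.mpr (Polynomial.isRoot_of_mem_roots hrg)
      have hf1ne : f1 ≠ 0 := by
        intro hh
        rw [hh, mul_zero] at hf1
        exact hf hf1.symm
      have hg1ne : g1 ≠ 0 := by
        intro hh
        rw [hh, mul_zero] at hg1
        exact hg hg1.symm
      have hlin : (X - C r : ℝ[X]) ≠ 0 := X_sub_C_ne_zero r
      have hdf : f.natDegree = f1.natDegree + 1 := by
        rw [← hf1, Polynomial.natDegree_mul hlin hf1ne, Polynomial.natDegree_X_sub_C]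
        omega
      have hlf1 : 0 < f1.leadingCoeff := by
        have h : f.leadingCoeff = f1.leadingCoeff := by
          rw [← hf1, Polynomial.leadingCoeff_mul, Polynomial.leadingCoeff_X_sub_C, one_mul]
        rwa [h] at hlf
      have hlg1 : 0 < g1.leadingCoeff := by
        have h : g.leadingCoeff = g1.leadingCoeff := by
          rw [← hg1, Polynomial.leadingCoeff_mul, Polynomial.leadingCoeff_X_sub_C, one_mul]
        rwa [h] at hlg
      have hfg1 : Interlaces f1 g1 := by
        apply interlaces_of_mul hf1ne hg1ne r
        rw [hf1, hg1]
        exact hfg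
      have hd1 : g1.natDegree = f1.natDegree ∨ g1.natDegree = f1.natDegree + 1 := by
        rcases hfg1.2.2 with ⟨h, _⟩ | ⟨h, _⟩
        · exact Or.inl h
        · exact Or.inr h
      have hres := ih f1 g1 (by omega) hf1ne hg1ne hlf1 hlg1 hfg1
      obtain ⟨_, _, hP1ne⟩ := P_spec f1 g1 hf1ne hg1ne hlf1 hlg1 hd1
      obtain ⟨_, _, hQ1ne⟩ := Q_spec f1 g1 hf1ne hg1ne hlf1 hlg1 hd1
      have hlift := interlaces_mul_X_sub_C hP1ne hQ1ne r hres
      have e1 : (X - C r) * ((1+X)*f1 + g1) = (1+X)*f + g := by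
        rw [← hf1, ← hg1]
        ring
      have e2 : (X - C r) * (X*f1 + (1+X)*g1) = X*f + (1+X)*g := by
        rw [← hf1, ← hg1]
        ring
      rwa [e1, e2] at hlift
    · push_neg at hex
      exact main_reduced f g hf hg hlf hlg hfg hex

lemma realRooted_zero : RealRooted 0 := by
  unfold RealRooted
  simp

lemma interlaces_one_add_X_mul {g : ℝ[X]} (hg : g ≠ 0) (hgRR : RealRooted g) :
    Interlaces g ((1+X) * g) := by
  have hC : (C (-1) : ℝ[X]) = -1 := by simp
  have hrw : ((1:ℝ[X]) + X) = X - C (-1) := by rw [hC]; ring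
  rw [hrw]
  have hQne : (X - C (-1)) * g ≠ 0 := mul_ne_zero (X_sub_C_ne_zero _) hg
  have hQroots : ((X - C (-1)) * g).roots = (-1) ::ₘ g.roots := by
    rw [Polynomial.roots_mul hQne, Polynomial.roots_X_sub_C, Multiset.singleton_add]
  have hQdeg : ((X - C (-1)) * g).natDegree = g.natDegree + 1 := by
    rw [Polynomial.natDegree_mul (X_sub_C_ne_zero _) hg, Polynomial.natDegree_X_sub_C]
    omega
  have hQRR : RealRooted ((X - C (-1)) * g) := by
    unfold RealRooted at hgRR ⊢
    rw [hQroots, hQdeg, Multiset.card_cons]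
    omega
  have hcntQ : ∀ x, cntLT (ascRoots ((X - C (-1)) * g)) x =
      cntLT (ascRoots g) x + (if (-1:ℝ) < x then 1 else 0) := by
    intro x
    rw [cntLT_ascRoots, cntLT_ascRoots, hQroots, Multiset.countP_cons]
  have hsb := ascRoots_sorted_s2 g
  have hsB := ascRoots_sorted_s2 ((X - C (-1)) * g)
  have hlb : (ascRoots g).length = g.natDegree := length_ascRoots' hgRR
  have hlB : (ascRoots ((X - C (-1)) * g)).length = g.natDegree + 1 := by
    rw [length_ascRoots' hQRR, hQdeg]
  refine ⟨hQRR, hgRR, Or.inr ⟨by omega, ?_⟩⟩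
  intro i hi
  constructor
  · have := (sorted_le_iff_cnt hsB hsb 0 (by omega)).mpr
      (fun x => by rw [hcntQ]; omega) i (by omega) (by omega)
    simpa using this
  · exact (sorted_le_iff_cnt hsb hsB 1 (by omega)).mpr
      (fun x => by rw [hcntQ]; split_ifs <;> omega) i (by omega) (by omega)

lemma interlaces_const {a : ℝ} (ha : 0 < a) : Interlaces ((1+X) * C a) (X * C a) := by
  have hC : (C (-1) : ℝ[X]) = -1 := by simp
  have hane : (C a : ℝ[X]) ≠ 0 := by simpa using ne_of_gt ha
  have hProots : ((1+X) * C a).roots = {-1} := by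
    rw [show ((1:ℝ[X])+X) * C a = C a * (X - C (-1)) by rw [hC]; ring]
    rw [Polynomial.roots_C_mul _ (ne_of_gt ha), Polynomial.roots_X_sub_C]
  have hQroots : ((X : ℝ[X]) * C a).roots = {0} := by
    rw [show (X:ℝ[X]) * C a = C a * (X - C 0) by rw [Polynomial.C_0]; ring]
    rw [Polynomial.roots_C_mul _ (ne_of_gt ha), Polynomial.roots_X_sub_C]
  have hPdeg : ((1+X) * C a).natDegree = 1 := by
    rw [show ((1:ℝ[X])+X) * C a = C a * (X - C (-1)) by rw [hC]; ring]
    rw [Polynomial.natDegree_mul hane (X_sub_C_ne_zero _), Polynomial.natDegree_X_sub_C]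
    simp
  have hQdeg : ((X:ℝ[X]) * C a).natDegree = 1 := by
    rw [show (X:ℝ[X]) * C a = C a * (X - C 0) by rw [Polynomial.C_0]; ring]
    rw [Polynomial.natDegree_mul hane (X_sub_C_ne_zero _), Polynomial.natDegree_X_sub_C]
    simp
  have hPRR : RealRooted ((1+X) * C a) := by
    unfold RealRooted
    rw [hProots, hPdeg]
    simp
  have hQRR : RealRooted ((X:ℝ[X]) * C a) := by
    unfold RealRooted
    rw [hQroots, hQdeg]
    simp
  have hPasc : ascRoots ((1+X) * C a) = [-1] := by
    apply ascRoots_eq_of_sorted (by rw [hProots]; rfl)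
    simp
  have hQasc : ascRoots ((X:ℝ[X]) * C a) = [0] := by
    apply ascRoots_eq_of_sorted (by rw [hQroots]; rfl)
    simp
  refine ⟨hQRR, hPRR, Or.inl ⟨by omega, ?_, ?_⟩⟩
  · intro i hi
    rw [hQdeg] at hi
    interval_cases i
    rw [hPasc, hQasc]
    norm_num
  · intro i hi
    rw [hQdeg] at hi
    omega

theorem stmt2' (f g : Polynomial ℝ)
    (hf : RealRooted f) (hg : RealRooted g)
    (hf' : ∀ i, 0 ≤ f.coeff i) (hg' : ∀ i, 0 ≤ g.coeff i)
    (hfg : Interlaces f g) :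
    Interlaces ((1 + X) * f + g) (X * f + (1 + X) * g) := by
  by_cases hf0 : f = 0
  · subst hf0
    by_cases hg0 : g = 0
    · subst hg0
      rw [show ((1:ℝ[X]) + X) * 0 + 0 = (1+X) * 0 by ring,
        show (X:ℝ[X]) * 0 + (1 + X) * 0 = (1+X) * (X * 0) by ring]
      simp only [mul_zero]
      exact ⟨realRooted_zero, realRooted_zero, Or.inl ⟨rfl, by simp, by simp⟩⟩
    · have h1 : Interlaces g ((1+X) * g) := interlaces_one_add_X_mul hg0 hfg.1
      rw [show ((1:ℝ[X]) + X) * 0 + g = g by ring,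
        show (X:ℝ[X]) * 0 + (1 + X) * g = (1+X) * g by ring]
      exact h1
  · by_cases hg0 : g = 0
    · subst hg0
      have hdeg0 : f.natDegree = 0 := by
        rcases hfg.2.2 with ⟨h, _⟩ | ⟨h, _⟩
        · simpa using h.symm
        · simp at h
      have hfa : f = C (f.coeff 0) := f.eq_C_of_natDegree_eq_zero hdeg0
      have ha : 0 < f.coeff 0 := by
        rcases lt_or_eq_of_le (hf' 0) with h | h
        · exact h
        · exfalso
          apply hf0
          rw [hfa, ← h, Polynomial.C_0]
      rw [show ((1:ℝ[X]) + X) * f + 0 = (1+X) * f by ring,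
        show (X:ℝ[X]) * f + (1 + X) * 0 = X * f by ring]
      rw [hfa]
      exact interlaces_const ha
    · have hlf : 0 < f.leadingCoeff := by
        rcases lt_or_eq_of_le (hf' f.natDegree) with h | h
        · exact h
        · exact absurd h.symm (Polynomial.leadingCoeff_ne_zero.mpr hf0)
      have hlg : 0 < g.leadingCoeff := by
        rcases lt_or_eq_of_le (hg' g.natDegree) with h | h
        · exact h
        · exact absurd h.symm (Polynomial.leadingCoeff_ne_zero.mpr hg0)
      exact main_pos f.natDegree f g le_rfl hf0 hg0 hlf hlg hfg

end InterlacingProof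

theorem stmt2 (f g : Polynomial ℝ)
    (hf : RealRooted f) (hg : RealRooted g)
    (hf' : ∀ i, 0 ≤ f.coeff i) (hg' : ∀ i, 0 ≤ g.coeff i)
    (hfg : Interlaces f g) :
    Interlaces ((1 + X) * f + g) (X * f + (1 + X) * g) := by
  exact stmt2' f g hf hg hf' hg' hfg
end
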